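/- arXiv:1202.1308 — 6 statements merged into one kernel-verified Lean document; each statement's English description precedes it below -/
import Mathlib

section
/- Let F be a field, G a finite group, H a subgroup of G, and N a normal subgroup of H. Let M be a finite-dimensional projective F[G]-module. Then the space of N-invariants M^N = {m ∈ M : n·m = m for all n ∈ N}, equipped with the F[H/N]-module structure induced by the H-action (which preserves M^N and is trivial on N), is a projective F[H/N]-module. -/
open scoped Classical

set_option linter.unusedSectionVars false

namespace InvProjAux

variable {G : Type} [Group G] (H : Subgroup G) (N : Subgroup H) [N.Normal]

/-- The set of right cosets `Hg`. -/
def T := Quotient (QuotientGroup.rightRel H)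

def tmk : G → T H := Quotient.mk _

noncomputable def tout : T H → G := Quotient.out

lemma tmk_tout (t : T H) : tmk H (tout H t) = t := Quotient.out_eq t

lemma mul_tout_inv_mem (g : G) : g * (tout H (tmk H g))⁻¹ ∈ H := by
  have h := Quotient.mk_out (s := QuotientGroup.rightRel H) g
  exact (QuotientGroup.rightRel_apply).mp h

lemma tmk_hmul (h : H) (g : G) : tmk H ((h : G) * g) = tmk H g := by
  apply Quotient.sound
  exact QuotientGroup.rightRel_apply.mpr (by simp)

noncomputable def hPart (g : G) : H := ⟨g * (tout H (tmk H g))⁻¹, mul_tout_inv_mem H g⟩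

lemma hPart_mul_tout (g : G) : ((hPart H g : G)) * tout H (tmk H g) = g := by
  simp [hPart]

lemma hPart_hmul (h : H) (g : G) : hPart H ((h : G) * g) = h * hPart H g := by
  apply Subtype.ext
  simp only [hPart, Subgroup.coe_mul, tmk_hmul]
  group

lemma hPart_tout (t : T H) : hPart H (tout H t) = 1 := by
  apply Subtype.ext
  simp [hPart, tmk_tout]

noncomputable def qmap (g : G) : H ⧸ N := QuotientGroup.mk (hPart H g)

noncomputable def srep (g : G) : G :=
  (((qmap H N g).out : H) : G) * tout H (tmk H g)

lemma qmap_hmul (h : H) (g : G) :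
    qmap H N ((h : G) * g) = (QuotientGroup.mk h : H ⧸ N) * qmap H N g := by
  simp [qmap, hPart_hmul, QuotientGroup.mk_mul]

lemma qmap_nmul (n : N) (g : G) : qmap H N (((n : H) : G) * g) = qmap H N g := by
  rw [qmap_hmul, (QuotientGroup.eq_one_iff (n : H)).mpr n.2, one_mul]

lemma srep_nmul (n : N) (g : G) : srep H N (((n : H) : G) * g) = srep H N g := by
  simp [srep, qmap_nmul, tmk_hmul]

lemma qmap_hmul_tout (h : H) (t : T H) :
    qmap H N ((h : G) * tout H t) = QuotientGroup.mk h := by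
  simp [qmap, hPart_hmul, hPart_tout]

lemma tmk_hmul_tout (h : H) (t : T H) : tmk H ((h : G) * tout H t) = t := by
  rw [tmk_hmul, tmk_tout]

lemma srep_hmul_tout (h : H) (t : T H) :
    srep H N ((h : G) * tout H t)
      = (((QuotientGroup.mk h : H ⧸ N).out : H) : G) * tout H t := by
  rw [srep, qmap_hmul_tout, tmk_hmul_tout]

lemma srep_rep (q : H ⧸ N) (t : T H) :
    srep H N (((q.out : H) : G) * tout H t) = ((q.out : H) : G) * tout H t := by
  rw [srep_hmul_tout, QuotientGroup.out_eq']

lemma srep_idem (g : G) : srep H N (srep H N g) = srep H N g := srep_rep H N _ _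

lemma srep_spec (g : G) :
    ∃ n : N, g = (((qmap H N g).out : H) : G) * ((n : H) : G) * tout H (tmk H g) := by
  have hmem : ((qmap H N g).out)⁻¹ * hPart H g ∈ N := by
    apply QuotientGroup.eq.mp
    rw [QuotientGroup.out_eq']
    rfl
  refine ⟨⟨_, hmem⟩, ?_⟩
  have h2 := hPart_mul_tout H g
  conv_lhs => rw [← h2]
  push_cast
  group

lemma srep_decomp (g : G) : ∃ n : N, g = ((n : H) : G) * srep H N g := by
  obtain ⟨n, hn⟩ := srep_spec H N g
  refine ⟨⟨(qmap H N g).out * (n : H) * ((qmap H N g).out)⁻¹, (‹N.Normal›).conj_mem _ n.2 _⟩, ?_⟩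
  rw [srep]
  conv_lhs => rw [hn]
  push_cast
  group



section AlgebraPart

variable (F : Type) [Field F] [Fintype N]

local notation "A" => MonoidAlgebra F G
local notation "R" => MonoidAlgebra F (H ⧸ N)

/-- Sum over the `N`-orbit of the canonical representative determined by `q` and `t`. -/
noncomputable def orbsum (q : H ⧸ N) (t : T H) : A :=
  ∑ n : N, MonoidAlgebra.single (((q.out : H) : G) * ((n : H) : G) * tout H t) (1 : F)

noncomputable def tau : A →ₗ[F] (T H →₀ R) :=
  (Finsupp.linearCombination F fun g =>
    if srep H N g = g then
      Finsupp.single (tmk H g) (MonoidAlgebra.single (qmap H N g) (1 : F))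
    else 0) ∘ₗ (MonoidAlgebra.coeffLinearEquiv F).toLinearMap

noncomputable def psi : (T H →₀ R) →ₗ[F] A :=
  Finsupp.lsum F fun t => (Finsupp.linearCombination F fun q => orbsum H N F q t) ∘ₗ
    (MonoidAlgebra.coeffLinearEquiv F).toLinearMap

lemma tau_single (g : G) (c : F) :
    tau H N F (MonoidAlgebra.single g c)
      = c • (if srep H N g = g then
          Finsupp.single (tmk H g) (MonoidAlgebra.single (qmap H N g) (1 : F)) else 0) := by
  rw [tau, LinearMap.comp_apply]
  erw [Finsupp.linearCombination_single]

lemma psi_single_f (t : T H) (r : R) :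
    psi H N F (Finsupp.single t r)
      = Finsupp.linearCombination F (fun q => orbsum H N F q t) r.coeff := by
  rw [psi]
  erw [Finsupp.lsum_single]
  rfl

lemma psi_single (t : T H) (q : H ⧸ N) (c : F) :
    psi H N F (Finsupp.single t (MonoidAlgebra.single q c)) = c • orbsum H N F q t := by
  rw [psi_single_f]
  erw [Finsupp.linearCombination_single]

lemma tau_apply_apply (x : A) (t : T H) (q : H ⧸ N) :
    (tau H N F x t).coeff q = x.coeff (((q.out : H) : G) * tout H t) := by
  induction x using MonoidAlgebra.induction_linear with
  | zero => simp
  | add f g hf hg =>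
      rw [map_add, Finsupp.add_apply, MonoidAlgebra.coeff_add, Finsupp.add_apply, hf, hg,
        MonoidAlgebra.coeff_add, Finsupp.add_apply]
  | single g c =>
      rw [tau_single]
      by_cases hg : srep H N g = g
      · rw [if_pos hg]
        by_cases hrep : g = ((q.out : H) : G) * tout H t
        · subst hrep
          rw [tmk_hmul_tout, qmap_hmul_tout, QuotientGroup.out_eq']
          simp [Finsupp.smul_apply, Finsupp.single_apply]
        · have hne : ¬ (tmk H g = t ∧ qmap H N g = q) := by
            rintro ⟨h1, h2⟩
            apply hrep
            conv_lhs => rw [← hg]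
            rw [srep, h1, h2]
          rw [MonoidAlgebra.coeff_single, Finsupp.single_apply (a := g), if_neg (by simpa [eq_comm] using hrep)]
          rcases Classical.em (tmk H g = t) with h1 | h1
          · have h2 : qmap H N g ≠ q := fun h2 => hne ⟨h1, h2⟩
            simp [Finsupp.smul_apply, Finsupp.single_apply, h1, h2]
          · simp [Finsupp.smul_apply, Finsupp.single_apply, h1]
      · rw [if_neg hg]
        have hne : g ≠ ((q.out : H) : G) * tout H t := by
          intro hrep
          exact hg (by rw [hrep]; exact srep_rep H N q t)
        rw [MonoidAlgebra.coeff_single, Finsupp.single_apply (a := g), if_neg (by simpa [eq_comm] using hne)]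
        simp

/-- transport of `N`-invariance. -/
lemma inv_apply (x : A)
    (hx : ∀ n : N, MonoidAlgebra.single (((n : H) : G)) (1 : F) * x = x)
    (n : N) (g : G) : x.coeff (((n : H) : G) * g) = x.coeff g := by
  conv_lhs => rw [← hx n]
  rw [MonoidAlgebra.coeff_single_mul_apply]
  simp

lemma tau_comm (h : H) (x : A)
    (hx : ∀ n : N, MonoidAlgebra.single (((n : H) : G)) (1 : F) * x = x) :
    tau H N F (MonoidAlgebra.single ((h : G)) (1 : F) * x)
      = MonoidAlgebra.single (QuotientGroup.mk h : H ⧸ N) (1 : F) • tau H N F x := by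
  ext t q
  rw [tau_apply_apply, MonoidAlgebra.coeff_single_mul_apply, one_mul]
  rw [Finsupp.smul_apply, smul_eq_mul, MonoidAlgebra.coeff_single_mul_apply, one_mul,
    tau_apply_apply]
  set q' : H ⧸ N := (QuotientGroup.mk h : H ⧸ N)⁻¹ * q with hq'
  have hmem : ((h⁻¹ * q.out : H))⁻¹ * q'.out ∈ N := by
    apply QuotientGroup.eq.mp
    rw [QuotientGroup.out_eq', hq', QuotientGroup.mk_mul, QuotientGroup.mk_inv,
      QuotientGroup.out_eq']
  set m : N := ⟨_, hmem⟩ with hm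
  have hout : (q'.out : H) = (h⁻¹ * q.out : H) * (m : H) := by
    rw [hm]
    group
  have hc : ((h⁻¹ * q.out : H) * (m : H) * (h⁻¹ * q.out : H)⁻¹ : H) ∈ N :=
    (‹N.Normal›).conj_mem _ m.2 _
  have key : ((q'.out : H) : G) * tout H t
      = (((⟨_, hc⟩ : N) : H) : G) * ((((h⁻¹ * q.out : H) : G)) * tout H t) := by
    rw [hout]
    push_cast
    group
  rw [key, inv_apply H N F x hx]
  push_cast
  group

lemma single_mul_orbsum (h : H) (q : H ⧸ N) (t : T H) :
    MonoidAlgebra.single ((h : G)) (1 : F) * orbsum H N F q t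
      = orbsum H N F ((QuotientGroup.mk h : H ⧸ N) * q) t := by
  rw [orbsum, Finset.mul_sum]
  have hmem : ((h * q.out : H))⁻¹ * ((QuotientGroup.mk h : H ⧸ N) * q).out ∈ N := by
    apply QuotientGroup.eq.mp
    rw [QuotientGroup.out_eq', QuotientGroup.mk_mul, QuotientGroup.out_eq']
  set m : N := ⟨_, hmem⟩ with hm
  have hout : ((((QuotientGroup.mk h : H ⧸ N) * q).out : H)) = (h * q.out : H) * (m : H) := by
    rw [hm]; group
  rw [orbsum]
  apply Fintype.sum_equiv (Equiv.mulLeft m⁻¹)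
  intro n
  rw [MonoidAlgebra.single_mul_single, one_mul]
  congr 1
  show (h : G) * (((q.out : H) : G) * ((n : H) : G) * tout H t)
    = (((((QuotientGroup.mk h : H ⧸ N) * q).out : H)) : G) * (((m⁻¹ * n : N) : H) : G) * tout H t
  rw [hout]
  push_cast
  group

lemma lin_orb_mul (h : H) (t : T H) (r : R) :
    Finsupp.linearCombination F (fun q => orbsum H N F q t)
        ((MonoidAlgebra.single (QuotientGroup.mk h : H ⧸ N) (1 : F) : R) * r).coeff
      = MonoidAlgebra.single ((h : G)) (1 : F)
        * Finsupp.linearCombination F (fun q => orbsum H N F q t) r.coeff := by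
  induction r using MonoidAlgebra.induction_linear with
  | zero => simp
  | add r s hr hs => rw [mul_add, MonoidAlgebra.coeff_add, map_add, MonoidAlgebra.coeff_add,
      map_add, mul_add, hr, hs]
  | single q c =>
      rw [show ((MonoidAlgebra.single (QuotientGroup.mk h : H ⧸ N) (1 : F) : R)
            * MonoidAlgebra.single q c)
          = MonoidAlgebra.single ((QuotientGroup.mk h : H ⧸ N) * q) c from by
        rw [MonoidAlgebra.single_mul_single, one_mul]]
      rw [MonoidAlgebra.coeff_single, MonoidAlgebra.coeff_single]
      erw [Finsupp.linearCombination_single, Finsupp.linearCombination_single]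
      rw [mul_smul_comm, single_mul_orbsum]

lemma psi_comm (h : H) (f : T H →₀ R) :
    psi H N F ((MonoidAlgebra.single (QuotientGroup.mk h : H ⧸ N) (1 : F)) • f)
      = MonoidAlgebra.single ((h : G)) (1 : F) * psi H N F f := by
  induction f using Finsupp.induction_linear with
  | zero => simp
  | add f g hf hg => rw [smul_add, map_add, map_add, mul_add, hf, hg]
  | single t r =>
      rw [Finsupp.smul_single, psi_single_f, psi_single_f, smul_eq_mul, lin_orb_mul]

lemma psi_inv (n : N) (f : T H →₀ R) :
    MonoidAlgebra.single (((n : H) : G)) (1 : F) * psi H N F f = psi H N F f := by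
  rw [← psi_comm]
  rw [show (QuotientGroup.mk ((n : H)) : H ⧸ N) = 1 from (QuotientGroup.eq_one_iff _).mpr n.2]
  rw [show (MonoidAlgebra.single (1 : H ⧸ N) (1 : F) : R) = 1 from rfl, one_smul]

lemma psi_tau_apply (x : A) (g0 : G) :
    (psi H N F (tau H N F x)).coeff g0 = x.coeff (srep H N g0) := by
  induction x using MonoidAlgebra.induction_linear with
  | zero => simp
  | add f g hf hg => rw [map_add, map_add, MonoidAlgebra.coeff_add, Finsupp.add_apply, hf, hg,
      MonoidAlgebra.coeff_add, Finsupp.add_apply]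
  | single g c =>
      rw [tau_single, map_smul]
      by_cases hg : srep H N g = g
      · rw [if_pos hg, psi_single, one_smul]
        rw [MonoidAlgebra.coeff_smul, Finsupp.smul_apply, smul_eq_mul, orbsum,
          MonoidAlgebra.coeff_sum, Finsupp.finset_sum_apply]
        by_cases hg0 : g = srep H N g0
        · obtain ⟨n0, hn0⟩ := srep_spec H N g0
          have hq : qmap H N g = qmap H N g0 := by
            rw [hg0, srep, qmap_hmul_tout, QuotientGroup.out_eq']
          have ht : tmk H g = tmk H g0 := by
            rw [hg0, srep, tmk_hmul_tout]
          rw [Finset.sum_eq_single n0]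
          · rw [hq, ht, MonoidAlgebra.single_apply, if_pos hn0.symm, mul_one,
              MonoidAlgebra.coeff_single, Finsupp.single_apply, if_pos hg0]
          · intro b _ hb
            rw [MonoidAlgebra.single_apply, if_neg]
            intro hb0
            apply hb
            rw [hq, ht] at hb0
            have h3 := hb0.trans hn0
            exact Subtype.ext (Subtype.ext (mul_left_cancel (mul_right_cancel h3)))
          · intro hn0'
            exact absurd (Finset.mem_univ n0) hn0'
        · rw [MonoidAlgebra.coeff_single, Finsupp.single_apply, if_neg (by simpa [eq_comm] using hg0)]
          rw [Finset.sum_eq_zero, mul_zero]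
          intro n _
          rw [MonoidAlgebra.single_apply, if_neg]
          intro hb0
          apply hg0
          rw [← hb0]
          rw [show (((qmap H N g).out : H) : G) * ((n : H) : G) * tout H (tmk H g)
              = ((((qmap H N g).out * (n : H) : H)) : G) * tout H (tmk H g) from by
            push_cast; group]
          rw [srep_hmul_tout, QuotientGroup.mk_mul,
            (QuotientGroup.eq_one_iff ((n : H))).mpr n.2, mul_one, QuotientGroup.out_eq']
          show _ = srep H N g
          exact hg.symm
      · rw [if_neg hg, map_zero, smul_zero, MonoidAlgebra.coeff_zero, Finsupp.coe_zero,
          Pi.zero_apply]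
        rw [MonoidAlgebra.coeff_single, Finsupp.single_apply, if_neg]
        intro hgg
        apply hg
        rw [hgg]
        exact srep_idem H N g0

lemma psi_tau_inv (x : A)
    (hx : ∀ n : N, MonoidAlgebra.single (((n : H) : G)) (1 : F) * x = x) :
    psi H N F (tau H N F x) = x := by
  ext g0
  rw [psi_tau_apply]
  obtain ⟨n, hn⟩ := srep_decomp H N g0
  conv_rhs => rw [hn]
  rw [inv_apply H N F x hx]

end AlgebraPart



/-- Upgrade an `F`-linear map commuting with the group action to a module map over the
monoid algebra. -/
noncomputable def ofCommutes {F : Type} [Field F] {Gam : Type} [Group Gam]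
    {V W : Type} [AddCommMonoid V] [AddCommMonoid W] [Module F V] [Module F W]
    [Module (MonoidAlgebra F Gam) V] [Module (MonoidAlgebra F Gam) W]
    [IsScalarTower F (MonoidAlgebra F Gam) V] [IsScalarTower F (MonoidAlgebra F Gam) W]
    (f : V →ₗ[F] W)
    (hf : ∀ (γ : Gam) (v : V),
      f (MonoidAlgebra.single γ (1 : F) • v) = MonoidAlgebra.single γ (1 : F) • f v) :
    V →ₗ[MonoidAlgebra F Gam] W where
  toFun := f
  map_add' := map_add f
  map_smul' := by
    intro r v
    simp only [RingHom.id_apply]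
    induction r using MonoidAlgebra.induction_on with
    | of γ => rw [MonoidAlgebra.of_apply]; exact hf γ v
    | add r s hr hs => rw [add_smul, add_smul, map_add, hr, hs]
    | smul c r hr => rw [smul_assoc, map_smul, hr, smul_assoc]

end InvProjAux

open InvProjAux in
/-- Invariants of a projective module under a normal subgroup of a subgroup, carrying the
induced module structure over the group algebra of the quotient, form a projective module.

The `F[H/N]`-module `V` is identified, via the `F`-linear injection `e`, with the space
of `N`-invariants of `M`, in such a way that the action of the class of `h : H` on `V`
corresponds to the action of `h` (as an element of `G`) on `M`. -/
theorem projective_of_invariants_of_projective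
    (F : Type) [Field F] (G : Type) [Group G] [Finite G]
    (H : Subgroup G) (N : Subgroup H) [N.Normal]
    (M : Type) [AddCommGroup M] [Module F M]
    [Module (MonoidAlgebra F G) M] [IsScalarTower F (MonoidAlgebra F G) M]
    [FiniteDimensional F M]
    (hM : Module.Projective (MonoidAlgebra F G) M)
    (V : Type) [AddCommGroup V] [Module F V]
    [Module (MonoidAlgebra F (H ⧸ N)) V] [IsScalarTower F (MonoidAlgebra F (H ⧸ N)) V]
    (e : V →ₗ[F] M) (he : Function.Injective e)
    (hrange : Set.range e = {m : M | ∀ n : N, MonoidAlgebra.of F G ((n : H) : G) • m = m})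
    (hcompat : ∀ (h : H) (v : V),
      e (MonoidAlgebra.of F (H ⧸ N) (QuotientGroup.mk h) • v) =
        MonoidAlgebra.of F G (h : G) • e v) :
    Module.Projective (MonoidAlgebra F (H ⧸ N)) V := by
  classical
  haveI : Fintype N := Fintype.ofFinite _
  obtain ⟨sG, hsG⟩ := hM.out
  obtain ⟨p, hp⟩ := e.exists_leftInverse_of_injective (LinearMap.ker_eq_bot.mpr he)
  have hpe : ∀ v : V, p (e v) = v := fun v => LinearMap.congr_fun hp v
  -- invariance of elements in the range of `e`
  have hinv : ∀ (v : V) (n : N),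
      MonoidAlgebra.single ((n : H) : G) (1 : F) • e v = e v := by
    intro v n
    have hmem : e v ∈ Set.range e := ⟨v, rfl⟩
    rw [hrange] at hmem
    simpa [MonoidAlgebra.of_apply] using hmem n
  -- componentwise invariance of `sG (e v)`
  have hcompinv : ∀ (v : V) (m : M) (n : N),
      MonoidAlgebra.single ((n : H) : G) (1 : F) * (sG (e v) m) = sG (e v) m := by
    intro v m n
    have h2 : (MonoidAlgebra.single ((n : H) : G) (1 : F)) • sG (e v) = sG (e v) := by
      rw [← map_smul, hinv v n]
    conv_rhs => rw [← h2]
    rw [Finsupp.smul_apply, smul_eq_mul]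
  -- the two `F`-linear maps
  set iota : V →ₗ[F] (M →₀ (T H →₀ MonoidAlgebra F (H ⧸ N))) :=
    (Finsupp.mapRange.linearMap (tau H N F)).comp ((sG.restrictScalars F).comp e) with hiota
  set rho : (M →₀ (T H →₀ MonoidAlgebra F (H ⧸ N))) →ₗ[F] V :=
    p.comp ((((Finsupp.linearCombination (MonoidAlgebra F G) (id : M → M))).restrictScalars
      F).comp (Finsupp.mapRange.linearMap (psi H N F))) with hrho
  have hiota_apply : ∀ v : V,
      iota v = Finsupp.mapRange.linearMap (tau H N F) (sG (e v)) := fun v => rfl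
  have hrho_apply : ∀ f : M →₀ (T H →₀ MonoidAlgebra F (H ⧸ N)),
      rho f = p (Finsupp.linearCombination (MonoidAlgebra F G) (id : M → M)
        (Finsupp.mapRange.linearMap (psi H N F) f)) := fun f => rfl
  -- splitting
  have hsplit : ∀ v : V, rho (iota v) = v := by
    intro v
    rw [hiota_apply, hrho_apply]
    have h1 : Finsupp.mapRange.linearMap (psi H N F)
        (Finsupp.mapRange.linearMap (tau H N F) (sG (e v))) = sG (e v) := by
      ext m : 1
      simp only [Finsupp.mapRange.linearMap_apply, Finsupp.mapRange_apply]
      exact psi_tau_inv H N F _ (hcompinv v m)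
    rw [h1, hsG (e v), hpe]
  -- equivariance of iota
  have hiota_comm : ∀ (q : H ⧸ N) (v : V),
      iota (MonoidAlgebra.single q (1 : F) • v) = MonoidAlgebra.single q (1 : F) • iota v := by
    intro q v
    obtain ⟨h, rfl⟩ := QuotientGroup.mk_surjective q
    rw [hiota_apply, hiota_apply]
    have he1 : e (MonoidAlgebra.single (QuotientGroup.mk h : H ⧸ N) (1 : F) • v)
        = MonoidAlgebra.single ((h : G)) (1 : F) • e v := by
      simpa [MonoidAlgebra.of_apply] using hcompat h v
    rw [he1, map_smul]
    refine Finsupp.ext fun m => ?_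
    rw [Finsupp.mapRange.linearMap_apply, Finsupp.mapRange_apply, Finsupp.smul_apply,
      smul_eq_mul, tau_comm H N F h _ (hcompinv v m), Finsupp.smul_apply,
      Finsupp.mapRange.linearMap_apply, Finsupp.mapRange_apply]
  -- everything in the image of psi lands in the range of e
  have hmemrange : ∀ f : M →₀ (T H →₀ MonoidAlgebra F (H ⧸ N)),
      Finsupp.linearCombination (MonoidAlgebra F G) (id : M → M)
        (Finsupp.mapRange.linearMap (psi H N F) f) ∈ Set.range e := by
    intro f
    rw [hrange]
    intro n
    have h1 : (MonoidAlgebra.single ((n : H) : G) (1 : F))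
        • Finsupp.mapRange.linearMap (psi H N F) f
        = Finsupp.mapRange.linearMap (psi H N F) f := by
      refine Finsupp.ext fun m => ?_
      rw [Finsupp.smul_apply, smul_eq_mul, Finsupp.mapRange.linearMap_apply,
        Finsupp.mapRange_apply, psi_inv H N F n (f m)]
    rw [MonoidAlgebra.of_apply, ← map_smul, h1]
  -- equivariance of rho
  have hrho_comm : ∀ (q : H ⧸ N) (f : M →₀ (T H →₀ MonoidAlgebra F (H ⧸ N))),
      rho (MonoidAlgebra.single q (1 : F) • f) = MonoidAlgebra.single q (1 : F) • rho f := by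
    intro q f
    obtain ⟨h, rfl⟩ := QuotientGroup.mk_surjective q
    rw [hrho_apply, hrho_apply]
    have h1 : Finsupp.mapRange.linearMap (psi H N F)
        (MonoidAlgebra.single (QuotientGroup.mk h : H ⧸ N) (1 : F) • f)
        = MonoidAlgebra.single ((h : G)) (1 : F) • Finsupp.mapRange.linearMap (psi H N F) f := by
      refine Finsupp.ext fun m => ?_
      rw [Finsupp.mapRange.linearMap_apply, Finsupp.mapRange_apply, Finsupp.smul_apply,
        psi_comm H N F h (f m), Finsupp.smul_apply, smul_eq_mul,
        Finsupp.mapRange.linearMap_apply, Finsupp.mapRange_apply]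
    rw [h1, map_smul]
    obtain ⟨w, hw⟩ := hmemrange f
    rw [← hw]
    have he2 : MonoidAlgebra.single ((h : G)) (1 : F) • e w
        = e (MonoidAlgebra.single (QuotientGroup.mk h : H ⧸ N) (1 : F) • w) := by
      simpa [MonoidAlgebra.of_apply] using (hcompat h w).symm
    rw [he2, hpe, hpe]
  -- conclude via a split injection into a free module
  refine Module.Projective.of_split (ofCommutes iota hiota_comm) (ofCommutes rho hrho_comm)
    (LinearMap.ext fun v => ?_)
  exact hsplit v
end

section
/- Let p be a prime, F a field of characteristic p, G a finite group, and N a normal subgroup of G such that p does not divide the index |G : N|. Let M be a finite-dimensional F[G]-module. Then the socle of M regarded as an F[N]-module (by restriction) is equal, as a subspace of M, to the socle of M as an F[G]-module. -/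
namespace SocleAux

variable {F : Type} [Field F] {G : Type} [Group G]
  {M : Type} [AddCommGroup M] [Module F M]

section OneGroup

variable [Module (MonoidAlgebra F G) M] [IsScalarTower F (MonoidAlgebra F G) M]

variable (F) in
/-- The action of a group element as an `F`-linear endomorphism. -/
noncomputable def gAct (g : G) : M →ₗ[F] M where
  toFun m := MonoidAlgebra.of F G g • m
  map_add' m m' := smul_add _ _ _
  map_smul' c m := by
    simp only [RingHom.id_apply]
    rw [← algebraMap_smul (MonoidAlgebra F G) c m, ← mul_smul, ← Algebra.commutes,
      mul_smul, algebraMap_smul]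

lemma gAct_apply (g : G) (m : M) : gAct F g m = MonoidAlgebra.of F G g • m := rfl

lemma gAct_gAct (g h : G) (m : M) : gAct F g (gAct F h m) = gAct F (g * h) m := by
  simp only [gAct_apply, ← mul_smul, ← map_mul]

lemma gAct_one (m : M) : gAct F (1 : G) m = m := by
  rw [gAct_apply, map_one, one_smul]

lemma gAct_inv_cancel (g : G) (m : M) : gAct F g (gAct F g⁻¹ m) = m := by
  rw [gAct_gAct, mul_inv_cancel, gAct_one]

/-- An `F`-subspace closed under the action of group elements is an `F[G]`-submodule. -/
def subOf (s : Submodule F M) (h : ∀ (g : G) m, m ∈ s → MonoidAlgebra.of F G g • m ∈ s) :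
    Submodule (MonoidAlgebra F G) M where
  carrier := s
  add_mem' := s.add_mem
  zero_mem' := s.zero_mem
  smul_mem' x m hm := by
    show x • m ∈ s
    induction x using MonoidAlgebra.induction_on with
    | of g => exact h g m hm
    | add f g hf hg => rw [add_smul]; exact s.add_mem hf hg
    | smul c f hf => rw [smul_assoc]; exact s.smul_mem c hf

@[simp] lemma mem_subOf {s : Submodule F M}
    {h : ∀ (g : G) m, m ∈ s → MonoidAlgebra.of F G g • m ∈ s} {m : M} :
    m ∈ subOf s h ↔ m ∈ s := Iff.rfl

end OneGroup

section TwoGroups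

variable {N : Subgroup G} [N.Normal]
  [Module (MonoidAlgebra F G) M] [IsScalarTower F (MonoidAlgebra F G) M]
  [Module (MonoidAlgebra F ↥N) M] [IsScalarTower F (MonoidAlgebra F ↥N) M]
  (hcompat : ∀ (n : N) (m : M),
      MonoidAlgebra.of F N n • m = MonoidAlgebra.of F G (n : G) • m)

/-- Translate of an `F[N]`-submodule by `g : G`. -/
noncomputable def cmap (g : G) (Q : Submodule (MonoidAlgebra F ↥N) M) : Submodule (MonoidAlgebra F ↥N) M :=
  subOf ((Q.restrictScalars F).map (gAct F g)) <| by
    rintro n m ⟨q, hq, rfl⟩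
    have hn' : g⁻¹ * ↑n * g ∈ N := by
      simpa using (‹N.Normal›.conj_mem (↑n) n.2 g⁻¹)
    refine ⟨MonoidAlgebra.of F ↥N ⟨g⁻¹ * ↑n * g, hn'⟩ • q, Q.smul_mem _ hq, ?_⟩
    rw [hcompat, hcompat]
    simp only [gAct_apply, ← mul_smul, ← map_mul]
    have hc : g * ↑(⟨g⁻¹ * ↑n * g, hn'⟩ : ↥N) = ↑n * g := by
      show g * (g⁻¹ * ↑n * g) = ↑n * g
      group
    rw [hc]

lemma mem_cmap {g : G} {Q : Submodule (MonoidAlgebra F ↥N) M} {m : M} :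
    m ∈ cmap hcompat g Q ↔ ∃ q ∈ Q, gAct F g q = m := by
  constructor
  · rintro ⟨q, hq, rfl⟩; exact ⟨q, hq, rfl⟩
  · rintro ⟨q, hq, rfl⟩; exact ⟨q, hq, rfl⟩

lemma cmap_cmap (g : G) (Q : Submodule (MonoidAlgebra F ↥N) M) :
    cmap hcompat g⁻¹ (cmap hcompat g Q) = Q := by
  ext m
  rw [mem_cmap]
  constructor
  · rintro ⟨q, hq, rfl⟩
    rw [mem_cmap] at hq
    obtain ⟨q', hq', rfl⟩ := hq
    rw [gAct_gAct, inv_mul_cancel, gAct_one]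
    exact hq'
  · intro hm
    refine ⟨gAct F g m, ?_, ?_⟩
    · rw [mem_cmap]; exact ⟨m, hm, rfl⟩
    · rw [gAct_gAct, inv_mul_cancel, gAct_one]

lemma cmap_mono (g : G) {Q Q' : Submodule (MonoidAlgebra F ↥N) M} (h : Q ≤ Q') :
    cmap hcompat g Q ≤ cmap hcompat g Q' := by
  intro m hm
  rw [mem_cmap] at hm ⊢
  obtain ⟨q, hq, rfl⟩ := hm
  exact ⟨q, h hq, rfl⟩

/-- Translation by `g` as an order isomorphism of the lattice of `F[N]`-submodules. -/
noncomputable def cmapIso (g : G) :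
    Submodule (MonoidAlgebra F ↥N) M ≃o Submodule (MonoidAlgebra F ↥N) M where
  toFun := cmap hcompat g
  invFun := cmap hcompat g⁻¹
  left_inv Q := cmap_cmap hcompat g Q
  right_inv Q := by
    have := cmap_cmap hcompat g⁻¹ Q
    rwa [inv_inv] at this
  map_rel_iff' {Q Q'} := by
    constructor
    · intro h
      have := cmap_mono hcompat g⁻¹ (show cmap hcompat g Q ≤ cmap hcompat g Q' from h)
      rwa [cmap_cmap, cmap_cmap] at this
    · exact cmap_mono hcompat g

lemma cmap_isAtom_iff (g : G) (Q : Submodule (MonoidAlgebra F ↥N) M) :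
    IsAtom (cmap hcompat g Q) ↔ IsAtom Q :=
  (cmapIso hcompat g).isAtom_iff Q

/-- A family of `F[N]`-submodules stable under translation has `G`-stable `sSup`. -/
lemma stable_sSup (s : Set (Submodule (MonoidAlgebra F ↥N) M))
    (hs : ∀ (g : G), ∀ Q ∈ s, cmap hcompat g Q ∈ s) :
    ∀ (g : G) (m : M), m ∈ sSup s → gAct F g m ∈ sSup s := by
  intro g m hm
  have h1 : gAct F g m ∈ cmap hcompat g (sSup s) := by
    rw [mem_cmap]; exact ⟨m, hm, rfl⟩
  have h2 : cmap hcompat g (sSup s) ≤ sSup s := by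
    have : cmap hcompat g (sSup s) = (cmapIso hcompat g) (sSup s) := rfl
    rw [this, OrderIso.map_sSup]
    exact iSup₂_le fun Q hQ => le_sSup (hs g Q hQ)
  exact h2 h1

end TwoGroups

end SocleAux

/-- The socle of a module: the sum of all of its simple submodules. -/
def moduleSocle (R M : Type) [Ring R] [AddCommGroup M] [Module R M] : Submodule R M :=
  sSup {S : Submodule R M | IsSimpleModule R S}

open SocleAux

/-- Let `F` have characteristic `p`, `G` a finite group and `N` a normal subgroup of `G`
of index not divisible by `p`.  For a finite-dimensional `F[G]`-module `M`, the socle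
of `M` as an `F[N]`-module (via restriction, expressed by the compatibility hypothesis)
coincides, as a subset of `M`, with the socle of `M` as an `F[G]`-module. -/
theorem socle_restriction_eq_socle
    (p : ℕ) (hp : p.Prime) (F : Type) [Field F] [CharP F p]
    (G : Type) [Group G] [Finite G] (N : Subgroup G) [N.Normal]
    (hind : ¬ p ∣ N.index)
    (M : Type) [AddCommGroup M] [Module F M]
    [Module (MonoidAlgebra F G) M] [IsScalarTower F (MonoidAlgebra F G) M]
    [Module (MonoidAlgebra F N) M] [IsScalarTower F (MonoidAlgebra F N) M]
    [FiniteDimensional F M]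
    (hcompat : ∀ (n : N) (m : M),
      MonoidAlgebra.of F N n • m = MonoidAlgebra.of F G (n : G) • m) :
    (moduleSocle (MonoidAlgebra F N) M : Set M) =
      (moduleSocle (MonoidAlgebra F G) M : Set M) := by
  classical
  haveI : IsArtinian F M := inferInstance
  haveI hartN : IsArtinian (MonoidAlgebra F ↥N) M := isArtinian_of_tower F inferInstance
  haveI hartG : IsArtinian (MonoidAlgebra F G) M := isArtinian_of_tower F inferInstance
  haveI : IsAtomic (Submodule (MonoidAlgebra F ↥N) M) :=
    isAtomic_of_orderBot_wellFounded_lt IsWellFounded.wf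
  haveI : IsAtomic (Submodule (MonoidAlgebra F G) M) :=
    isAtomic_of_orderBot_wellFounded_lt IsWellFounded.wf
  have socN_eq : moduleSocle (MonoidAlgebra F ↥N) M
      = sSup {Q : Submodule (MonoidAlgebra F ↥N) M | IsAtom Q} := by
    unfold moduleSocle; congr 1; ext Q; exact isSimpleModule_iff_isAtom
  have socG_eq : moduleSocle (MonoidAlgebra F G) M
      = sSup {S : Submodule (MonoidAlgebra F G) M | IsAtom S} := by
    unfold moduleSocle; congr 1; ext S; exact isSimpleModule_iff_isAtom
  -- `G`-stability of the `F[N]`-socle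
  have hstabN : ∀ (g : G) (m : M), m ∈ moduleSocle (MonoidAlgebra F ↥N) M →
      gAct F g m ∈ moduleSocle (MonoidAlgebra F ↥N) M := by
    rw [socN_eq]
    exact stable_sSup hcompat _ (fun g Q hQ => (cmap_isAtom_iff hcompat g Q).mpr hQ)
  -- the `F[N]`-socle as an `F[G]`-submodule
  set V' : Submodule (MonoidAlgebra F G) M :=
    subOf ((moduleSocle (MonoidAlgebra F ↥N) M).restrictScalars F)
      (fun g m hm => hstabN g m hm) with hV'
  -- Direction 1 : the `F[G]`-socle is contained in the `F[N]`-socle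
  have dir1 : moduleSocle (MonoidAlgebra F G) M ≤ V' := by
    refine sSup_le fun S hS => ?_
    haveI hSsimple : IsSimpleModule (MonoidAlgebra F G) ↥S := hS
    have hSatom : IsAtom S := isSimpleModule_iff_isAtom.mp hS
    set Sn : Submodule (MonoidAlgebra F ↥N) M :=
      subOf (S.restrictScalars F)
        (fun n m hm => by rw [hcompat]; exact S.smul_mem _ hm) with hSn
    set sT := {Q : Submodule (MonoidAlgebra F ↥N) M | IsAtom Q ∧ Q ≤ Sn} with hsT
    have hsT_stable : ∀ (g : G), ∀ Q ∈ sT, cmap hcompat g Q ∈ sT := by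
      intro g Q hQ
      refine ⟨(cmap_isAtom_iff hcompat g Q).mpr hQ.1, ?_⟩
      intro m hm
      rw [mem_cmap] at hm
      obtain ⟨q, hq, rfl⟩ := hm
      have hqS : q ∈ S := hQ.2 hq
      exact S.smul_mem (MonoidAlgebra.of F G g) hqS
    have hT_stab := stable_sSup hcompat sT hsT_stable
    set T' : Submodule (MonoidAlgebra F G) M :=
      subOf ((sSup sT).restrictScalars F) (fun g m hm => hT_stab g m hm) with hT'
    have hT'_le_S : T' ≤ S := by
      intro m hm
      have hmT : m ∈ sSup sT := hm
      have hle : sSup sT ≤ Sn := sSup_le fun Q hQ => hQ.2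
      exact hle hmT
    have hSne : S ≠ ⊥ := hSatom.1
    obtain ⟨x, hxS, hx0⟩ := S.exists_mem_ne_zero_of_ne_bot hSne
    have hSn_ne : Sn ≠ ⊥ := by
      intro h
      have : x ∈ Sn := hxS
      rw [h] at this
      exact hx0 this
    obtain ⟨a, ha, haSn⟩ := (eq_bot_or_exists_atom_le Sn).resolve_left hSn_ne
    have haT : a ≤ sSup sT := le_sSup ⟨ha, haSn⟩
    have hT'_ne : T' ≠ ⊥ := by
      intro h
      obtain ⟨y, hy, hy0⟩ := a.exists_mem_ne_zero_of_ne_bot ha.1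
      have hyT : y ∈ T' := haT hy
      rw [h] at hyT
      exact hy0 hyT
    have hT'S : T' = S := by
      rcases lt_or_eq_of_le hT'_le_S with h | h
      · exact absurd (hSatom.2 T' h) hT'_ne
      · exact h
    intro m hm
    rw [← hT'S] at hm
    have hmT : m ∈ sSup sT := hm
    have hle : sSup sT ≤ moduleSocle (MonoidAlgebra F ↥N) M := by
      rw [socN_eq]; exact sSup_le_sSup fun Q hQ => hQ.1
    exact hle hmT
  -- semisimplicity of the socle as an `F[N]`-module
  have hss : IsSemisimpleModule (MonoidAlgebra F ↥N) ↥(moduleSocle (MonoidAlgebra F ↥N) M) := by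
    have h1 : IsSemisimpleModule (MonoidAlgebra F ↥N)
        ↥(⨆ Q ∈ {Q : Submodule (MonoidAlgebra F ↥N) M | IsSimpleModule (MonoidAlgebra F ↥N) ↥Q}, Q) :=
      isSemisimpleModule_biSup_of_isSemisimpleModule_submodule
        (fun Q hQ => by
          haveI : IsSimpleModule (MonoidAlgebra F ↥N) ↥Q := hQ
          infer_instance)
    rw [← sSup_eq_iSup] at h1
    exact h1
  -- complements inside the socle, as `F[N]`-submodules
  have hNcompl : ∀ Q : Submodule (MonoidAlgebra F ↥N) M,
      Q ≤ moduleSocle (MonoidAlgebra F ↥N) M →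
      ∃ C, C ≤ moduleSocle (MonoidAlgebra F ↥N) M ∧ Q ⊓ C = ⊥ ∧
        Q ⊔ C = moduleSocle (MonoidAlgebra F ↥N) M := by
    intro Q hQ
    set soc := moduleSocle (MonoidAlgebra F ↥N) M
    obtain ⟨W, hW⟩ := exists_isCompl (Q.comap soc.subtype)
    refine ⟨W.map soc.subtype, Submodule.map_subtype_le _ _, ?_, ?_⟩
    · rw [eq_bot_iff]
      rintro x ⟨hxQ, hxC⟩
      obtain ⟨w, hw, rfl⟩ := hxC
      have hmem : w ∈ Q.comap soc.subtype ⊓ W := ⟨hxQ, hw⟩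
      rw [hW.inf_eq_bot] at hmem
      rw [hmem]
      simp
    · have h2 : Q ⊔ W.map soc.subtype = (Q.comap soc.subtype ⊔ W).map soc.subtype := by
        rw [Submodule.map_sup, Submodule.map_comap_subtype, inf_eq_right.2 hQ]
      rw [h2, hW.sup_eq_top, Submodule.map_top, Submodule.range_subtype]
  -- relative Maschke: complements for `F[G]`-submodules of the socle
  have hk : ((N.index : F)) ≠ 0 := fun h0 => hind ((CharP.cast_eq_zero_iff F p _).mp h0)
  letI : Fintype (G ⧸ N) := Fintype.ofFinite _
  have hcard : (Fintype.card (G ⧸ N) : ℕ) = N.index := by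
    rw [← Nat.card_eq_fintype_card, ← Subgroup.index_eq_card]
  have hGcompl : ∀ A : Submodule (MonoidAlgebra F G) M, A ≤ V' →
      ∃ C', C' ≤ V' ∧ A ⊓ C' = ⊥ ∧ A ⊔ C' = V' := by
    intro A hA
    set Qn : Submodule (MonoidAlgebra F ↥N) M :=
      subOf (A.restrictScalars F)
        (fun n m hm => by rw [hcompat]; exact A.smul_mem _ hm) with hQn
    have hQn_le : Qn ≤ moduleSocle (MonoidAlgebra F ↥N) M := fun m hm => hA hm
    obtain ⟨C, hC_le, hQC_inf, hQC_sup⟩ := hNcompl Qn hQn_le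
    obtain ⟨D, hD⟩ :=
      Submodule.exists_isCompl ((moduleSocle (MonoidAlgebra F ↥N) M).restrictScalars F)
    set E : Submodule F M := C.restrictScalars F ⊔ D with hE
    have hcomplQE : IsCompl (Qn.restrictScalars F) E := by
      constructor
      · rw [disjoint_iff, eq_bot_iff]
        rintro x ⟨hxQ, hxE⟩
        simp only [SetLike.mem_coe] at hxQ hxE
        rw [Submodule.mem_sup] at hxE
        obtain ⟨c, hc, d, hd, rfl⟩ := hxE
        have hx_soc : (c + d : M) ∈ moduleSocle (MonoidAlgebra F ↥N) M := hQn_le hxQ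
        have hc_soc : (c : M) ∈ moduleSocle (MonoidAlgebra F ↥N) M := hC_le hc
        have hd' : d ∈ ((moduleSocle (MonoidAlgebra F ↥N) M).restrictScalars F) ⊓ D := by
          refine ⟨?_, hd⟩
          have hsub := Submodule.sub_mem (moduleSocle (MonoidAlgebra F ↥N) M) hx_soc hc_soc
          simpa using hsub
        rw [hD.inf_eq_bot] at hd'
        have hd0 : (d : M) = 0 := hd'
        have hxc : (c + d : M) = c := by rw [hd0, add_zero]
        have hmem2 : (c + d : M) ∈ Qn ⊓ C := ⟨hxQ, by rw [hxc]; exact hc⟩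
        rw [hQC_inf] at hmem2
        exact hmem2
      · rw [codisjoint_iff, eq_top_iff]
        rintro x -
        have hx : x ∈ ((moduleSocle (MonoidAlgebra F ↥N) M).restrictScalars F) ⊔ D := by
          rw [hD.sup_eq_top]; trivial
        rw [Submodule.mem_sup] at hx
        obtain ⟨v, hv, d, hd, rfl⟩ := hx
        have hv' : (v : M) ∈ Qn ⊔ C := by rw [hQC_sup]; exact hv
        rw [Submodule.mem_sup] at hv'
        obtain ⟨q, hq, c, hc, rfl⟩ := hv'
        rw [Submodule.mem_sup]
        refine ⟨q, hq, c + d, ?_, by abel⟩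
        rw [hE, Submodule.mem_sup]
        exact ⟨c, hc, d, hd, rfl⟩
    set π₀ : M →ₗ[F] M :=
      (Qn.restrictScalars F).subtype ∘ₗ
        ((Qn.restrictScalars F).linearProjOfIsCompl E hcomplQE) with hπ₀
    have hπ₀_mem : ∀ m : M, π₀ m ∈ A := fun m =>
      (((Qn.restrictScalars F).linearProjOfIsCompl E hcomplQE) m).2
    have hπ₀_fix : ∀ m ∈ A, π₀ m = m := by
      intro m hm
      have h1 := Submodule.linearProjOfIsCompl_apply_left hcomplQE
        (⟨m, hm⟩ : (Qn.restrictScalars F))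
      exact congrArg Subtype.val h1
    have hπ₀_zero : ∀ m ∈ E, π₀ m = 0 := by
      intro m hm
      have h1 := Submodule.linearProjOfIsCompl_apply_right hcomplQE (⟨m, hm⟩ : E)
      exact congrArg Subtype.val h1
    have hC_E : ∀ m ∈ C, m ∈ E := fun m hm => by
      rw [hE]; exact Submodule.mem_sup_left hm
    have hdecomp : ∀ m ∈ moduleSocle (MonoidAlgebra F ↥N) M, m - π₀ m ∈ C := by
      intro m hm
      have hm' : m ∈ Qn ⊔ C := by rw [hQC_sup]; exact hm
      rw [Submodule.mem_sup] at hm'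
      obtain ⟨q, hq, c, hc, rfl⟩ := hm'
      have hπ : π₀ (q + c) = q := by
        rw [map_add, hπ₀_fix q hq, hπ₀_zero c (hC_E c hc), add_zero]
      rw [hπ]
      simpa using hc
    have hπ₀_equiv : ∀ m ∈ moduleSocle (MonoidAlgebra F ↥N) M, ∀ n : ↥N,
        π₀ (gAct F (↑n : G) m) = gAct F (↑n : G) (π₀ m) := by
      intro m hm n
      have hq : π₀ m ∈ A := hπ₀_mem m
      have hc : m - π₀ m ∈ C := hdecomp m hm
      have h1 : gAct F (↑n : G) (π₀ m) ∈ A := by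
        rw [gAct_apply, ← hcompat]
        exact Qn.smul_mem (MonoidAlgebra.of F ↥N n) hq
      have h2 : gAct F (↑n : G) (m - π₀ m) ∈ C := by
        rw [gAct_apply, ← hcompat]
        exact C.smul_mem (MonoidAlgebra.of F ↥N n) hc
      have hmeq : gAct F (↑n : G) m = gAct F (↑n : G) (π₀ m) + gAct F (↑n : G) (m - π₀ m) := by
        rw [← map_add]
        congr 1
        abel
      rw [hmeq, map_add, hπ₀_fix _ h1, hπ₀_zero _ (hC_E _ h2), add_zero]
    set ψ : M →ₗ[F] M :=
      ((N.index : F))⁻¹ • ∑ q : G ⧸ N, (gAct F q.out ∘ₗ π₀ ∘ₗ gAct F q.out⁻¹) with hψ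
    have hψ_apply : ∀ m : M,
        ψ m = ((N.index : F))⁻¹ • ∑ q : G ⧸ N, gAct F q.out (π₀ (gAct F q.out⁻¹ m)) := by
      intro m
      rw [hψ]
      simp [LinearMap.sum_apply, LinearMap.comp_apply]
    have hψ_memA : ∀ m : M, ψ m ∈ A := by
      intro m
      rw [hψ_apply]
      refine Submodule.smul_mem (A.restrictScalars F) _ (Submodule.sum_mem _ fun q _ => ?_)
      exact A.smul_mem (MonoidAlgebra.of F G q.out) (hπ₀_mem _)
    have hψ_fix : ∀ m ∈ A, ψ m = m := by
      intro m hm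
      rw [hψ_apply]
      have hterm : ∀ q : G ⧸ N, gAct F q.out (π₀ (gAct F q.out⁻¹ m)) = m := by
        intro q
        have h1 : gAct F q.out⁻¹ m ∈ A := A.smul_mem _ hm
        rw [hπ₀_fix _ h1, gAct_inv_cancel]
      rw [Finset.sum_congr rfl fun q _ => hterm q, Finset.sum_const, Finset.card_univ, hcard,
        ← Nat.cast_smul_eq_nsmul F, smul_smul, inv_mul_cancel₀ hk, one_smul]
    have hψ_equiv : ∀ m ∈ moduleSocle (MonoidAlgebra F ↥N) M, ∀ h : G,
        ψ (gAct F h m) = gAct F h (ψ m) := by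
      intro m hm h
      rw [hψ_apply, hψ_apply, map_smul, map_sum]
      congr 1
      have key : ∀ q : G ⧸ N,
          gAct F (h • q).out (π₀ (gAct F ((h • q).out)⁻¹ (gAct F h m)))
            = gAct F h (gAct F q.out (π₀ (gAct F q.out⁻¹ m))) := by
        intro q
        have hn : ((h • q).out)⁻¹ * (h * q.out) ∈ N := by
          rw [← QuotientGroup.eq]
          calc ((h • q).out : G ⧸ N) = h • q := QuotientGroup.out_eq' _
            _ = ((h * q.out : G) : G ⧸ N) := by
                rw [← MulAction.Quotient.mk_smul_out N h q]
                rfl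
        have hsoc : gAct F q.out⁻¹ m ∈ moduleSocle (MonoidAlgebra F ↥N) M := hstabN _ _ hm
        have hg' : h * q.out = (h • q).out * (((h • q).out)⁻¹ * (h * q.out)) := by
          rw [mul_inv_cancel_left]
        calc gAct F (h • q).out (π₀ (gAct F ((h • q).out)⁻¹ (gAct F h m)))
            = gAct F (h • q).out (π₀ (gAct F (((h • q).out)⁻¹ * h) m)) := by rw [gAct_gAct]
          _ = gAct F (h • q).out (π₀ (gAct F ((((h • q).out)⁻¹ * (h * q.out)) * q.out⁻¹) m)) := by
              congr 2
              group
          _ = gAct F (h • q).out (π₀ (gAct F (↑(⟨_, hn⟩ : ↥N) : G)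
                (gAct F q.out⁻¹ m))) := by rw [gAct_gAct]
          _ = gAct F (h • q).out (gAct F (↑(⟨_, hn⟩ : ↥N) : G) (π₀ (gAct F q.out⁻¹ m))) := by
              rw [hπ₀_equiv _ hsoc]
          _ = gAct F ((h • q).out * (((h • q).out)⁻¹ * (h * q.out))) (π₀ (gAct F q.out⁻¹ m)) := by
              rw [gAct_gAct]
          _ = gAct F (h * q.out) (π₀ (gAct F q.out⁻¹ m)) := by rw [← hg']
          _ = gAct F h (gAct F q.out (π₀ (gAct F q.out⁻¹ m))) := by rw [gAct_gAct]
      rw [← Equiv.sum_comp (MulAction.toPerm h)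
        (fun q : G ⧸ N => gAct F q.out (π₀ (gAct F q.out⁻¹ (gAct F h m))))]
      exact Finset.sum_congr rfl fun q _ => key q
    set C' : Submodule (MonoidAlgebra F G) M :=
      subOf (((moduleSocle (MonoidAlgebra F ↥N) M).restrictScalars F) ⊓ LinearMap.ker ψ)
        (by
          intro g m hm
          have hm1 : m ∈ moduleSocle (MonoidAlgebra F ↥N) M := (Submodule.mem_inf.mp hm).1
          have hm2 : ψ m = 0 := LinearMap.mem_ker.mp (Submodule.mem_inf.mp hm).2
          refine Submodule.mem_inf.mpr ⟨hstabN g m hm1, LinearMap.mem_ker.mpr ?_⟩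
          have hgm : (MonoidAlgebra.of F G g • m) = gAct F g m := rfl
          rw [hgm, hψ_equiv m hm1 g, hm2, map_zero]) with hC'
    refine ⟨C', fun m hm => hm.1, ?_, ?_⟩
    · rw [eq_bot_iff]
      rintro x ⟨hxA, hxC⟩
      have hx0 : x = 0 := by
        rw [← hψ_fix x hxA]
        exact LinearMap.mem_ker.mp hxC.2
      rw [hx0]
      simp
    · refine le_antisymm (sup_le hA fun m hm => hm.1) ?_
      intro m hm
      rw [Submodule.mem_sup]
      refine ⟨ψ m, hψ_memA m, m - ψ m, ?_, by abel⟩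
      have h1 : ψ m ∈ moduleSocle (MonoidAlgebra F ↥N) M := hA (hψ_memA m)
      have hmsoc : m ∈ moduleSocle (MonoidAlgebra F ↥N) M := hm
      refine Submodule.mem_inf.mpr ⟨Submodule.sub_mem _ hmsoc h1, LinearMap.mem_ker.mpr ?_⟩
      rw [map_sub, hψ_fix _ (hψ_memA m), sub_self]
  -- conclusion: the socle as `F[G]`-module equals `V'`
  set sTG := {S : Submodule (MonoidAlgebra F G) M | IsAtom S ∧ S ≤ V'} with hsTG
  have hT_le : sSup sTG ≤ V' := sSup_le fun S hS => hS.2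
  obtain ⟨C', hC'le, hinf, hsup⟩ := hGcompl (sSup sTG) hT_le
  have hC'bot : C' = ⊥ := by
    rcases eq_bot_or_exists_atom_le C' with h | ⟨a, ha, hale⟩
    · exact h
    · exfalso
      have haT : a ≤ sSup sTG := le_sSup ⟨ha, hale.trans hC'le⟩
      have hab : a ≤ ⊥ := by rw [← hinf]; exact le_inf haT hale
      exact ha.1 (le_bot_iff.mp hab)
  have hVT : V' = sSup sTG := by rw [← hsup, hC'bot, sup_bot_eq]
  have dir2 : V' ≤ moduleSocle (MonoidAlgebra F G) M := by
    rw [hVT, socG_eq]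
    exact sSup_le_sSup fun S hS => hS.1
  ext m
  constructor
  · intro hm
    exact dir2 (show m ∈ V' from hm)
  · intro hm
    exact dir1 hm
end

section
/- Let p be a prime, H a finite group, and U a normal p-subgroup of H. Let M be a finite-dimensional complex representation of H whose character vanishes at every p-element g ≠ 1 of H (i.e., at every nonidentity element whose order is a power of p). Then the character of the H/U-representation M^U (the U-invariants, with the induced H/U-action) vanishes at every nonidentity p-element of H/U, and dim_ℂ M^U = dim_ℂ M / |U|. -/
/-- Let `U` be a normal `p`-subgroup of a finite group `H` and let `ρ` be a
finite-dimensional complex representation of `H` whose character vanishes at every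
nonidentity `p`-element of `H`.  Then the character of the induced `H/U`-representation
on the `U`-invariants (realized as the representation `ρ'` on `V`, identified with the
invariants via the `ℂ`-linear injection `e` intertwining the actions) vanishes at every
nonidentity `p`-element of `H/U`, and `dim M^U = dim M / |U|`. -/
theorem character_of_invariants_vanishes_on_p_elements
    (p : ℕ) (hp : p.Prime) (H : Type) [Group H] [Finite H]
    (U : Subgroup H) [U.Normal] (hU : IsPGroup p U)
    (M : Type) [AddCommGroup M] [Module ℂ M] [FiniteDimensional ℂ M]
    (ρ : Representation ℂ H M)
    (hvan : ∀ g : H, g ≠ 1 → (∃ k, orderOf g = p ^ k) → LinearMap.trace ℂ M (ρ g) = 0)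
    (V : Type) [AddCommGroup V] [Module ℂ V] [FiniteDimensional ℂ V]
    (ρ' : Representation ℂ (H ⧸ U) V)
    (e : V →ₗ[ℂ] M) (he : Function.Injective e)
    (hrange : Set.range e = {m : M | ∀ u : U, ρ u m = m})
    (hcompat : ∀ (h : H) (v : V), e (ρ' (QuotientGroup.mk h) v) = ρ h (e v)) :
    (∀ x : H ⧸ U, x ≠ 1 → (∃ k, orderOf x = p ^ k) → LinearMap.trace ℂ V (ρ' x) = 0) ∧
      Module.finrank ℂ M = Nat.card U * Module.finrank ℂ V := by
  haveI : Fact p.Prime := ⟨hp⟩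
  haveI : Fintype U := Fintype.ofFinite U
  have hcard : (Nat.card U : ℂ) ≠ 0 := by
    exact_mod_cast Nat.card_pos.ne'
  -- the averaging projection
  set π : M →ₗ[ℂ] M := (Nat.card U : ℂ)⁻¹ • ∑ u : U, ρ (u : H) with hπ
  have π_apply : ∀ m : M, π m = (Nat.card U : ℂ)⁻¹ • ∑ u : U, ρ (u : H) m := by
    intro m
    simp [hπ, LinearMap.sum_apply]
  have π_inv : ∀ (m : M) (u' : U), ρ (u' : H) (π m) = π m := by
    intro m u'
    rw [π_apply, map_smul, map_sum]
    congr 1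
    refine Fintype.sum_equiv (Equiv.mulLeft u') _ _ fun x => ?_
    show ρ (u' : H) (ρ (x : H) m) = ρ ((u' * x : U) : H) m
    rw [Subgroup.coe_mul, map_mul, Module.End.mul_apply]
  have π_fix : ∀ m : M, (∀ u : U, ρ (u : H) m = m) → π m = m := by
    intro m hm
    rw [π_apply]
    simp only [hm]
    rw [Finset.sum_const, Finset.card_univ, ← Nat.card_eq_fintype_card,
      ← Nat.cast_smul_eq_nsmul ℂ, smul_smul, inv_mul_cancel₀ hcard, one_smul]
  have hmem_range : ∀ m : M, π m ∈ LinearMap.range e := by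
    intro m
    have : π m ∈ Set.range e := by
      rw [hrange]; exact fun u => π_inv m u
    obtain ⟨v, hv⟩ := this
    exact ⟨v, hv⟩
  -- the retraction r : M → V with e ∘ r = π
  obtain ⟨r, her, hre⟩ : ∃ r : M →ₗ[ℂ] V, (∀ m, e (r m) = π m) ∧ r ∘ₗ e = LinearMap.id := by
    let eq := LinearEquiv.ofInjective e he
    refine ⟨eq.symm.toLinearMap ∘ₗ LinearMap.codRestrict (LinearMap.range e) π hmem_range,
      ?_, ?_⟩
    · intro m
      show e (eq.symm ⟨π m, hmem_range m⟩) = π m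
      have h2 : e (eq.symm ⟨π m, hmem_range m⟩) = (eq (eq.symm ⟨π m, hmem_range m⟩) : M) := by
        simp [eq, LinearEquiv.ofInjective_apply]
      rw [h2, LinearEquiv.apply_symm_apply]
    · ext v
      apply he
      show e (eq.symm ⟨π (e v), hmem_range (e v)⟩) = e v
      have h2 : e (eq.symm ⟨π (e v), hmem_range (e v)⟩)
          = (eq (eq.symm ⟨π (e v), hmem_range (e v)⟩) : M) := by
        simp [eq, LinearEquiv.ofInjective_apply]
      rw [h2, LinearEquiv.apply_symm_apply]
      apply π_fix
      intro u
      have hmem : e v ∈ Set.range e := ⟨v, rfl⟩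
      rw [hrange] at hmem
      exact hmem u
  -- key trace formula
  have key : ∀ h : H, LinearMap.trace ℂ V (ρ' (QuotientGroup.mk h)) =
      (Nat.card U : ℂ)⁻¹ * ∑ u : U, LinearMap.trace ℂ M (ρ (h * (u : H))) := by
    intro h
    have hfac : ρ h ∘ₗ π = e ∘ₗ (ρ' (QuotientGroup.mk h) ∘ₗ r) := by
      ext m
      simp only [LinearMap.comp_apply]
      rw [hcompat, her]
    have t1 : LinearMap.trace ℂ M (ρ h ∘ₗ π) = LinearMap.trace ℂ V (ρ' (QuotientGroup.mk h)) := by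
      rw [hfac, LinearMap.trace_comp_comm']
      congr 1
      rw [LinearMap.comp_assoc, hre, LinearMap.comp_id]
    have t2 : LinearMap.trace ℂ M (ρ h ∘ₗ π) =
        (Nat.card U : ℂ)⁻¹ * ∑ u : U, LinearMap.trace ℂ M (ρ (h * (u : H))) := by
      have hc : ρ h ∘ₗ π = (Nat.card U : ℂ)⁻¹ • ∑ u : U, ρ (h * (u : H)) := by
        ext m
        simp only [LinearMap.comp_apply, LinearMap.smul_apply, LinearMap.sum_apply, π_apply,
          map_smul, map_sum, map_mul, Module.End.mul_apply]
      rw [hc, map_smul, map_sum, smul_eq_mul]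
    rw [← t1, t2]
  constructor
  · intro x hx hxp
    obtain ⟨h, rfl⟩ := QuotientGroup.mk_surjective x
    rw [key h, mul_eq_zero]
    right
    refine Finset.sum_eq_zero fun u _ => ?_
    apply hvan
    · intro hcon
      apply hx
      have hinv : h = (u : H)⁻¹ := by rw [eq_inv_iff_mul_eq_one]; exact hcon
      have hmemU : h ∈ U := hinv ▸ U.inv_mem u.2
      exact (QuotientGroup.eq_one_iff h).mpr hmemU
    · obtain ⟨k, hk⟩ := hxp
      have hz : IsPGroup p (Subgroup.zpowers (QuotientGroup.mk h : H ⧸ U)) := by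
        apply IsPGroup.iff_orderOf.mpr
        intro g
        have hd : orderOf (g : H ⧸ U) ∣ orderOf (QuotientGroup.mk h : H ⧸ U) :=
          orderOf_dvd_of_mem_zpowers g.2
        rw [Subgroup.orderOf_coe, hk] at hd
        exact ((Nat.dvd_prime_pow hp).mp hd).imp fun j hj => hj.2
      have hker : IsPGroup p ((QuotientGroup.mk' U).ker) := by
        rw [QuotientGroup.ker_mk']
        exact hU
      have hN : IsPGroup p ((Subgroup.zpowers (QuotientGroup.mk h : H ⧸ U)).comap
          (QuotientGroup.mk' U)) := hz.comap_of_ker_isPGroup _ hker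
      have hmem : h * (u : H) ∈ (Subgroup.zpowers (QuotientGroup.mk h : H ⧸ U)).comap
          (QuotientGroup.mk' U) := by
        show QuotientGroup.mk (h * (u : H)) ∈ Subgroup.zpowers (QuotientGroup.mk h : H ⧸ U)
        have h1 : (QuotientGroup.mk (u : H) : H ⧸ U) = 1 := (QuotientGroup.eq_one_iff _).mpr u.2
        rw [QuotientGroup.mk_mul, h1, mul_one]
        exact Subgroup.mem_zpowers _
      obtain ⟨j, hj⟩ := IsPGroup.iff_orderOf.mp hN ⟨_, hmem⟩
      rw [Subgroup.orderOf_mk] at hj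
      exact ⟨j, hj⟩
  · have h1 := key 1
    rw [show QuotientGroup.mk (1 : H) = (1 : H ⧸ U) from rfl, map_one, LinearMap.trace_one] at h1
    have hsum : ∑ u : U, LinearMap.trace ℂ M (ρ ((1 : H) * (u : H))) =
        (Module.finrank ℂ M : ℂ) := by
      rw [Finset.sum_eq_single (1 : U)]
      · simp [LinearMap.trace_one]
      · intro u _ hu
        apply hvan
        · simp only [one_mul]
          exact fun hc => hu (by ext; simpa using hc)
        · obtain ⟨k, hk⟩ := IsPGroup.iff_orderOf.mp hU u
          rw [one_mul, Subgroup.orderOf_coe]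
          exact ⟨k, hk⟩
      · simp
    rw [hsum] at h1
    have hfin : (Nat.card U : ℂ) * (Module.finrank ℂ V : ℂ) = (Module.finrank ℂ M : ℂ) := by
      rw [h1]; field_simp
    exact_mod_cast hfin.symm
end

section
/- Let ℓ be an odd prime and n ≥ 4 an integer. Let W be the subgroup of GL(n, 𝔽_ℓ) consisting of all matrices of the form P·D where P is a permutation matrix and D is a diagonal matrix with all diagonal entries equal to 1 or −1 and det D = 1 (i.e., an even number of entries equal to −1); so |W| = 2^{n−1} · n!. Then for every nonzero vector v ∈ 𝔽_ℓ^n, the orbit {w·v : w ∈ W} has at least 2n elements. -/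
open Finset

private lemma two_mul_le_two_pow : ∀ n : ℕ, 4 ≤ n → 2 * n ≤ 2 ^ (n - 1) := by
  intro n hn
  induction n, hn using Nat.le_induction with
  | base => norm_num
  | succ k hk ih =>
    have h2 : 2 ^ (k - 1) + 2 ^ (k - 1) = 2 ^ k := by
      rw [← two_mul, ← pow_succ']
      congr 1
      omega
    have h3 : (2 : ℕ) ≤ 2 ^ (k - 1) := by
      have : (2 : ℕ) ^ 1 ≤ 2 ^ (k - 1) := Nat.pow_le_pow_right (by norm_num) (by omega)
      simpa using this
    simp only [Nat.add_sub_cancel]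
    omega

/-- For an odd prime `ℓ` and `n ≥ 4`, the orbit of any nonzero vector of `𝔽_ℓ^n` under
the group of even-signed permutation matrices (products `P * D` of a permutation matrix
`P` and a diagonal matrix `D` with entries `±1` and `det D = 1`), acting by
matrix-vector multiplication, has at least `2n` elements. -/
theorem even_signed_perm_orbit_ge
    (ℓ n : ℕ) (hl : ℓ.Prime) (hodd : Odd ℓ) (hn : 4 ≤ n)
    (v : Fin n → ZMod ℓ) (hv : v ≠ 0) :
    2 * n ≤ Set.ncard {x : Fin n → ZMod ℓ |
      ∃ (σ : Equiv.Perm (Fin n)) (d : Fin n → ZMod ℓ),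
        (∀ i, d i = 1 ∨ d i = -1) ∧ (Matrix.diagonal d).det = 1 ∧
        x = (σ.permMatrix (ZMod ℓ) * Matrix.diagonal d).mulVec v} := by
  classical
  haveI : Fact ℓ.Prime := ⟨hl⟩
  haveI : NeZero ℓ := ⟨hl.pos.ne'⟩
  haveI : NeZero n := ⟨by omega⟩
  set S := {x : Fin n → ZMod ℓ |
      ∃ (σ : Equiv.Perm (Fin n)) (d : Fin n → ZMod ℓ),
        (∀ i, d i = 1 ∨ d i = -1) ∧ (Matrix.diagonal d).det = 1 ∧
        x = (σ.permMatrix (ZMod ℓ) * Matrix.diagonal d).mulVec v} with hSdef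
  -- 2 is invertible
  have h2 : (2 : ZMod ℓ) ≠ 0 := by
    intro h
    have hdvd : ℓ ∣ 2 := by
      have h' : ((2 : ℕ) : ZMod ℓ) = 0 := by exact_mod_cast h
      exact (ZMod.natCast_eq_zero_iff 2 ℓ).mp h'
    have hl2 : ℓ = 2 := (Nat.prime_dvd_prime_iff_eq hl Nat.prime_two).mp hdvd
    rw [hl2] at hodd
    exact (by norm_num : ¬ Odd 2) hodd
  have hne_neg : ∀ x : ZMod ℓ, x ≠ 0 → x ≠ -x := by
    intro x hx h
    have h0 : (2 : ZMod ℓ) * x = 0 := by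
      rw [two_mul]
      exact eq_neg_iff_add_eq_zero.mp h
    rcases mul_eq_zero.mp h0 with h' | h'
    · exact h2 h'
    · exact hx h'
  -- membership helper
  have hmem : ∀ (σ : Equiv.Perm (Fin n)) (d : Fin n → ZMod ℓ),
      (∀ i, d i = 1 ∨ d i = -1) → (∏ i, d i) = 1 →
      (fun p => d (σ p) * v (σ p)) ∈ S := by
    intro σ d hd hprod
    refine ⟨σ, d, hd, by rw [Matrix.det_diagonal]; exact hprod, ?_⟩
    rw [show σ.permMatrix (ZMod ℓ) = σ.toPEquiv.toMatrix from rfl, PEquiv.toMatrix_toPEquiv_mul]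
    funext p
    exact (Matrix.mulVec_diagonal d v (σ p)).symm
  obtain ⟨j, hj⟩ : ∃ j, v j ≠ 0 := by
    by_contra h
    push_neg at h
    exact hv (funext fun p => h p)
  set w := v j with hwdef
  have hw : w ≠ 0 := hj
  by_cases hA : ∀ p, v p = w ∨ v p = -w
  · -- Case I : all entries are ±w; use all even sign patterns
    have hvne : ∀ p, v p ≠ 0 := by
      intro p
      rcases hA p with h | h <;> rw [h]
      · exact hw
      · exact neg_ne_zero.mpr hw
    set ST : Finset (Fin n) → Finset (Fin n) :=
      fun T => if Even T.card then T else insert j T with hSTdef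
    set ψ : Finset (Fin n) → (Fin n → ZMod ℓ) :=
      fun T p => (if p ∈ ST T then (-1 : ZMod ℓ) else 1) * v p with hψ
    have hmemψ : ∀ T ∈ (univ.erase j).powerset, ψ T ∈ S := by
      intro T hT
      rw [Finset.mem_powerset] at hT
      have hjT : j ∉ T := fun h => (Finset.mem_erase.mp (hT h)).1 rfl
      have hSTcard : Even (ST T).card := by
        by_cases h : Even T.card
        · simpa [hSTdef, h] using h
        · simp only [hSTdef, if_neg h]
          rw [Finset.card_insert_of_notMem hjT]
          exact Nat.even_add_one.mpr h
      have hm := hmem (Equiv.refl _) (fun p => if p ∈ ST T then (-1 : ZMod ℓ) else 1)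
        (fun p => by by_cases h : p ∈ ST T <;> simp [h])
        (by rw [Finset.prod_ite_mem, Finset.univ_inter, Finset.prod_const]
            exact hSTcard.neg_one_pow)
      exact hm
    have hm1 : (-1 : ZMod ℓ) ≠ 1 := by
      intro h
      exact h2 (by linear_combination -h)
    have hinj : Set.InjOn ψ ↑((univ.erase j).powerset) := by
      intro T hT T' hT' hEq
      have hT1 : T ⊆ univ.erase j := Finset.mem_powerset.mp (Finset.mem_coe.mp hT)
      have hT1' : T' ⊆ univ.erase j := Finset.mem_powerset.mp (Finset.mem_coe.mp hT')
      have hjT : j ∉ T := fun h => (Finset.mem_erase.mp (hT1 h)).1 rfl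
      have hjT' : j ∉ T' := fun h => (Finset.mem_erase.mp (hT1' h)).1 rfl
      ext p
      by_cases hpj : p = j
      · subst hpj; exact iff_of_false hjT hjT'
      · have h1 := congrFun hEq p
        simp only [hψ] at h1
        have h2' := mul_right_cancel₀ (hvne p) h1
        have hst : ∀ T₀ : Finset (Fin n), p ∈ ST T₀ ↔ p ∈ T₀ := by
          intro T₀
          by_cases h : Even T₀.card <;> simp [hSTdef, h, Finset.mem_insert, hpj]
        have hiff : p ∈ ST T ↔ p ∈ ST T' := by
          by_cases hT0 : p ∈ ST T <;> by_cases hT0' : p ∈ ST T'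
          · exact iff_of_true hT0 hT0'
          · rw [if_pos hT0, if_neg hT0'] at h2'
            exact absurd h2' hm1
          · rw [if_neg hT0, if_pos hT0'] at h2'
            exact absurd h2'.symm hm1
          · exact iff_of_false hT0 hT0'
        rw [hst T, hst T'] at hiff
        exact hiff
    have hsub1 : ↑(((univ.erase j).powerset).image ψ) ⊆ S := by
      intro x hx
      obtain ⟨T, hT, rfl⟩ := Finset.mem_image.mp (Finset.mem_coe.mp hx)
      exact hmemψ T hT
    calc 2 * n ≤ 2 ^ (n - 1) := two_mul_le_two_pow n hn
      _ = ((univ.erase j).powerset).card := by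
          rw [Finset.card_powerset, Finset.card_erase_of_mem (Finset.mem_univ j),
            Finset.card_univ, Fintype.card_fin]
      _ = (((univ.erase j).powerset).image ψ).card := (Finset.card_image_of_injOn hinj).symm
      _ = (↑(((univ.erase j).powerset).image ψ) : Set _).ncard := (Set.ncard_coe_finset _).symm
      _ ≤ S.ncard := Set.ncard_le_ncard hsub1 (Set.toFinite S)
  · -- Case II : some entry is not ±w
    push_neg at hA
    obtain ⟨k, hk1, hk2⟩ := hA
    set A : Finset (Fin n) := univ.filter (fun p => v p = w ∨ v p = -w) with hAdef
    have hjA : j ∈ A := by simp [hAdef, hwdef]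
    have hkA : k ∉ A := by simp [hAdef, hk1, hk2]
    set m := A.card with hmdef
    have hm1 : 1 ≤ m := Finset.card_pos.mpr ⟨j, hjA⟩
    have hmn : m < n := by
      have hss : A ⊂ univ := Finset.ssubset_univ_iff.mpr
        (fun h => hkA (h ▸ Finset.mem_univ k))
      have := Finset.card_lt_card hss
      simpa using this
    have hcompl : Aᶜ.card = n - m := by
      rw [Finset.card_compl]
      simp [hmdef]
    have hnm : n = m + (n - m) := by omega
    set eA := A.orderIsoOfFin rfl with heA
    set eB := Aᶜ.orderIsoOfFin hcompl with heB
    set σ0 : Equiv.Perm (Fin n) :=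
      (finCongr hnm).trans <|
        (finSumFinEquiv.symm).trans <|
          (Equiv.sumCongr eA.toEquiv
            (eB.toEquiv.trans (Equiv.subtypeEquivRight (fun x => Finset.mem_compl)))).trans
            (Equiv.sumCompl (· ∈ A)) with hσ0def
    have hσ0 : ∀ p : Fin n, σ0 p ∈ A ↔ p.val < m := by
      intro p
      rcases lt_or_ge p.val m with h | h
      · have e1 : (finCongr hnm) p = Fin.castAdd (n - m) ⟨p.val, h⟩ := by
          ext; simp
        have e2 : σ0 p = ((eA ⟨p.val, h⟩ : A) : Fin n) := by
          simp only [hσ0def, Equiv.trans_apply, e1, finSumFinEquiv_symm_apply_castAdd,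
            Equiv.sumCongr_apply, Sum.map_inl, Equiv.sumCompl_apply_inl]
          rfl
        rw [e2]
        simpa [h] using (eA ⟨p.val, h⟩).2
      · have e1 : (finCongr hnm) p = Fin.natAdd m ⟨p.val - m, by omega⟩ := by
          ext
          simp [Fin.natAdd]
          omega
        have e2 : σ0 p = (((Equiv.subtypeEquivRight (fun x => Finset.mem_compl))
            (eB ⟨p.val - m, by omega⟩) : {x : Fin n // x ∉ A}) : Fin n) := by
          simp only [hσ0def, Equiv.trans_apply, e1, finSumFinEquiv_symm_apply_natAdd,
            Equiv.sumCongr_apply, Sum.map_inr, Equiv.sumCompl_apply_inr]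
          rfl
        rw [e2]
        exact iff_of_false ((Equiv.subtypeEquivRight (fun x => Finset.mem_compl))
          (eB ⟨p.val - m, by omega⟩)).2 (by omega)
    have hq01 : σ0 0 ≠ σ0 1 := by
      intro h
      have h01 := σ0.injective h
      have hval : (1 : Fin n).val = 1 := by
        rw [Fin.val_one']
        exact Nat.mod_eq_of_lt (by omega)
      have hv01 : (0 : Fin n).val = (1 : Fin n).val := congrArg Fin.val h01
      rw [Fin.val_zero, hval] at hv01
      exact absurd hv01 (by omega)
    set Q : Finset (Fin n) := {σ0 0, σ0 1} with hQdef
    set t : Bool → Fin n → ZMod ℓ :=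
      fun b p => if b then (if p ∈ Q then (-1 : ZMod ℓ) else 1) else 1 with htdef
    have htpm : ∀ b p, t b p = 1 ∨ t b p = -1 := by
      intro b p
      cases b <;> by_cases h : p ∈ Q <;> simp [htdef, h]
    have htprod : ∀ b, (∏ p, t b p) = 1 := by
      intro b
      cases b
      · simp [htdef]
      · simp only [htdef, if_true]
        rw [Finset.prod_ite_mem, Finset.univ_inter, Finset.prod_const]
        have hQc : Q.card = 2 := by
          rw [hQdef, Finset.card_insert_of_notMem (by simp [hq01]), Finset.card_singleton]
        rw [hQc]
        norm_num
    set Φ : Fin n × Bool → (Fin n → ZMod ℓ) :=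
      fun ib p => t ib.2 (σ0 (p - ib.1)) * v (σ0 (p - ib.1)) with hΦdef
    have hmemΦ : ∀ ib, Φ ib ∈ S := by
      rintro ⟨i, b⟩
      have hm := hmem ((Equiv.subRight i).trans σ0) (t b) (htpm b) (htprod b)
      have hfun : (fun p => t b (((Equiv.subRight i).trans σ0) p)
          * v (((Equiv.subRight i).trans σ0) p)) = Φ (i, b) := by
        funext p
        simp [hΦdef, Equiv.trans_apply, Equiv.subRight_apply]
      rw [hfun] at hm
      exact hm
    have hclass : ∀ (i : Fin n) (b : Bool) (q : Fin n),
        (Φ (i, b) q = w ∨ Φ (i, b) q = -w) ↔ (q - i).val < m := by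
      intro i b q
      have hAiff : (v (σ0 (q - i)) = w ∨ v (σ0 (q - i)) = -w) ↔ (q - i).val < m := by
        rw [← hσ0 (q - i)]
        simp [hAdef]
      rcases htpm b (σ0 (q - i)) with h | h
      · simp only [hΦdef]
        rw [h, one_mul]
        exact hAiff
      · simp only [hΦdef]
        rw [h, ← hAiff]
        constructor
        · rintro (h' | h')
          · rw [neg_one_mul] at h'
            exact Or.inr (neg_eq_iff_eq_neg.mp h')
          · rw [neg_one_mul] at h'
            exact Or.inl (neg_inj.mp h')
        · rintro (h' | h')
          · exact Or.inr (by rw [h']; ring)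
          · exact Or.inl (by rw [h']; ring)
    have hinjΦ : Function.Injective Φ := by
      rintro ⟨i, b⟩ ⟨i', b'⟩ hEq
      have key : ∀ q : Fin n, ((q - i).val < m ↔ (q - i').val < m) := by
        intro q
        rw [← hclass i b q, ← hclass i' b' q, hEq]
      have hii : i = i' := by
        by_contra hne'
        have hd0 : i - i' ≠ 0 := sub_ne_zero_of_ne hne'
        have hdv : 1 ≤ (i - i').val := by
          rcases Nat.eq_zero_or_pos (i - i').val with h | h
          · exact absurd (Fin.ext (by simp [h])) hd0
          · exact h
        have key2 : ∀ e : Fin n, (e.val < m ↔ (e + (i - i')).val < m) := by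
          intro e
          have h' := key (e + i)
          rw [add_sub_cancel_right, add_sub_assoc] at h'
          exact h'
        rcases lt_or_ge (i - i').val m with hdm | hdm
        · set e : Fin n := ⟨m - (i - i').val, by omega⟩ with hedef
          have h1 : e.val < m := by
            simp only [hedef]
            omega
          have h2' := (key2 e).mp h1
          have hadd : (e + (i - i')).val = (e.val + (i - i').val) % n := Fin.val_add _ _
          have hsum : e.val + (i - i').val = m := by
            simp only [hedef]
            omega
          rw [hadd, hsum, Nat.mod_eq_of_lt (by omega)] at h2'
          omega
        · have h2' := (key2 0).mp (by simpa using (show 0 < m by omega))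
          rw [zero_add] at h2'
          omega
      subst hii
      have hbb : b = b' := by
        by_contra hbb
        have h0 := congrFun hEq i
        have hsub : i - i = 0 := sub_self i
        simp only [hΦdef, hsub] at h0
        have hw0 : v (σ0 0) ≠ 0 := by
          have h00 : σ0 0 ∈ A := (hσ0 0).mpr (by simpa using (show 0 < m by omega))
          rw [hAdef, Finset.mem_filter] at h00
          rcases h00.2 with h' | h' <;> rw [h']
          · exact hw
          · exact neg_ne_zero.mpr hw
        have hq0 : σ0 0 ∈ Q := by simp [hQdef]
        cases b <;> cases b'
        · exact hbb rfl
        · simp only [htdef, if_pos hq0, Bool.false_eq_true, if_false, if_true] at h0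
          rw [one_mul, neg_one_mul] at h0
          exact hne_neg _ hw0 h0
        · simp only [htdef, if_pos hq0, Bool.false_eq_true, if_false, if_true] at h0
          rw [one_mul, neg_one_mul] at h0
          exact hne_neg _ hw0 h0.symm
        · exact hbb rfl
      rw [hbb]
    have hsub2 : ↑((Finset.univ : Finset (Fin n × Bool)).image Φ) ⊆ S := by
      intro x hx
      obtain ⟨ib, _, rfl⟩ := Finset.mem_image.mp (Finset.mem_coe.mp hx)
      exact hmemΦ ib
    calc 2 * n = (Finset.univ : Finset (Fin n × Bool)).card := by
          rw [Finset.card_univ, Fintype.card_prod, Fintype.card_fin, Fintype.card_bool]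
          ring
      _ = ((Finset.univ : Finset (Fin n × Bool)).image Φ).card :=
          (Finset.card_image_of_injective _ hinjΦ).symm
      _ = (↑((Finset.univ : Finset (Fin n × Bool)).image Φ) : Set _).ncard :=
          (Set.ncard_coe_finset _).symm
      _ ≤ S.ncard := Set.ncard_le_ncard hsub2 (Set.toFinite S)
end

section
/- Let q be a prime power and let n ≥ 5. Let T = {(t_1, …, t_n) ∈ (𝔽_qˣ)^n : t_1 t_2 ⋯ t_n = 1}, on which the symmetric group S_n acts by permuting coordinates, inducing an action on group homomorphisms β : T → ℂˣ by (σ·β)(t) = β(σ⁻¹·t). Then for every nontrivial group homomorphism β : T → ℂˣ, the orbit {σ·β : σ ∈ S_n} has at least n elements. -/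
open Finset Equiv Nat


lemma fact_aux1 : ∀ n : ℕ, 5 ≤ n → n * n ≤ n !
  | 5, _ => by norm_num [Nat.factorial]
  | (n+6), _ => by
    have ih := fact_aux1 (n+5) (by omega)
    have h1 : n + 6 ≤ (n+5)! := le_trans (by nlinarith) ih
    calc (n+6) * (n+6) ≤ (n+6) * (n+5)! := Nat.mul_le_mul_left _ h1
      _ = (n+6)! := rfl

lemma fact_step (a b : ℕ) : a ! * (a+1)^b ≤ (a+b)! := by
  induction b with
  | zero => simp
  | succ b ih =>
    have : a ! * (a+1)^(b+1) = (a ! * (a+1)^b) * (a+1) := by ring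
    rw [this]
    calc (a ! * (a+1)^b) * (a+1) ≤ (a+b)! * (a+1) := Nat.mul_le_mul_right _ ih
      _ ≤ (a+b)! * (a+b+1) := Nat.mul_le_mul_left _ (by omega)
      _ = (a+b+1)! := by rw [Nat.factorial_succ]; ring

lemma fact_k2 : ∀ m : ℕ, 3 ≤ m → (m !)^2 * (2 * (2*m)) ≤ (2*m)!
  | 3, _ => by norm_num [Nat.factorial]
  | (m+4), _ => by
    have ih := fact_k2 (m+3) (by omega)
    have hm : 3 ≤ m + 3 := by omega
    set s := m + 3 with hs
    have key : (s+1)^3 ≤ s * ((2*s+1) * (2*s+2)) := by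
      have hs1 : 1 ≤ s := by omega
      have h2 : s ≤ s^3 := Nat.le_self_pow (by omega) s
      have h3 : 1 ≤ s^2 := Nat.one_le_pow _ _ (by omega)
      nlinarith [h2, h3, hs1]
    have h1 : s * ((s+1)! ^2 * (2 * (2*(s+1)))) = ((s !)^2 * (2*(2*s))) * (s+1)^3 := by
      rw [Nat.factorial_succ]; ring
    have h2 : ((s !)^2 * (2*(2*s))) * (s+1)^3 ≤ (2*s)! * (s * ((2*s+1) * (2*s+2))) :=
      Nat.mul_le_mul ih key
    have h3 : (2*s)! * (s * ((2*s+1) * (2*s+2))) = s * ((2*(s+1))!) := by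
      have : 2*(s+1) = (2*s+1)+1 := by ring
      rw [this, Nat.factorial_succ, Nat.factorial_succ]; ring
    have := h1 ▸ (h3 ▸ h2)
    have hspos : 0 < s := by omega
    show ((m+4)!)^2 * (2 * (2*(m+4))) ≤ (2*(m+4))!
    have hm4 : m + 4 = s + 1 := by omega
    rw [hm4]
    exact Nat.le_of_mul_le_mul_left this hspos


lemma key_ineq2 (m : ℕ) (hm : 2 ≤ m) : ∀ k, 2 ≤ k → 5 ≤ k*m → (m !)^k * (k * (k*m)) ≤ (k*m)! := by
  intro k hk
  induction k, hk using Nat.le_induction with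
  | base =>
    intro h5
    exact fact_k2 m (by omega)
  | succ k hk ih =>
    intro _
    by_cases h5 : 5 ≤ k * m
    · have IHk := ih h5
      have hstar : m ! * (k+1)^2 ≤ k^2 * (k*m+1)^m := by
        have h2 : m ! ≤ m^m := Nat.factorial_le_pow m
        have hk1 : (k+1)^2 ≤ 3*k^2 := by nlinarith
        have h4 : (4:ℕ) ≤ 2^m := by
          calc (4:ℕ) = 2^2 := by norm_num
            _ ≤ 2^m := Nat.pow_le_pow_right (by omega) hm
        have h3 : 3*m^m ≤ (k*m+1)^m := by
          calc 3*m^m ≤ 2^m * m^m := by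
                have : (3:ℕ) ≤ 2^m := by omega
                exact Nat.mul_le_mul_right _ this
            _ = (2*m)^m := (mul_pow 2 m m).symm
            _ ≤ (k*m+1)^m := Nat.pow_le_pow_left (by nlinarith) m
        calc m ! * (k+1)^2 ≤ m^m * (3*k^2) := Nat.mul_le_mul h2 hk1
          _ = k^2 * (3*m^m) := by ring
          _ ≤ k^2 * (k*m+1)^m := Nat.mul_le_mul_left _ h3
      have hmain : k^2 * ((m !)^(k+1) * ((k+1) * ((k+1)*m))) ≤ k^2 * (((k+1)*m)!) := by
        calc k^2 * ((m !)^(k+1) * ((k+1) * ((k+1)*m)))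
            = ((m !)^k * (k * (k*m))) * (m ! * (k+1)^2) := by ring
          _ ≤ ((k*m)!) * (k^2 * (k*m+1)^m) := Nat.mul_le_mul IHk hstar
          _ = k^2 * ((k*m)! * (k*m+1)^m) := by ring
          _ ≤ k^2 * ((k*m+m)!) := Nat.mul_le_mul_left _ (fact_step (k*m) m)
          _ = k^2 * (((k+1)*m)!) := by ring_nf
      have hkpos : 0 < k^2 := by positivity
      exact Nat.le_of_mul_le_mul_left hmain hkpos
    · have hk2 : k = 2 := by nlinarith
      have hm2 : m = 2 := by nlinarith
      subst hk2; subst hm2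
      norm_num [Nat.factorial]

lemma key_ineq (k m : ℕ) (hk : 2 ≤ k) (hm : 1 ≤ m) (h5 : 5 ≤ k*m) :
    (m !)^k * (k * (k*m)) ≤ (k*m)! := by
  rcases Nat.lt_or_ge m 2 with h | h
  · have hm1 : m = 1 := by omega
    subst hm1
    simp only [Nat.factorial_one, one_pow, one_mul, Nat.mul_one] at *
    exact fact_aux1 k h5
  · exact key_ineq2 m h k hk h5


lemma perm_tuple_count {X : Type} {n : ℕ} (f : Fin n → X) (p q : Fin n)
    (hf : f p ≠ f q) : n ≤ Set.ncard (Set.range fun σ : Equiv.Perm (Fin n) => f ∘ σ) := by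
  classical
  set A : Finset (Fin n) := univ.filter (fun i => f i = f p) with hA
  set B : Finset (Fin n) := univ.filter (fun i => ¬ f i = f p) with hB
  have hpA : p ∈ A := by simp [hA]
  have hqB : q ∈ B := by simp [hB]; exact fun h => hf h.symm
  set s : Finset (Fin n × Fin n) := insert (p,p) (A ×ˢ B) with hs
  set g : Fin n × Fin n → (Fin n → X) := fun ακ => f ∘ (Equiv.swap ακ.1 ακ.2) with hg
  set Sset : (Fin n → X) → Finset (Fin n) := fun h => univ.filter (fun i => h i = f p)
    with hSset
  have hbase : Sset (g (p,p)) = A := by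
    simp [hg, Equiv.swap_self, hSset, hA]
  have hpair : ∀ α κ, α ∈ A → κ ∈ B → Sset (g (α, κ)) = insert κ (A.erase α) := by
    intro α κ hα hκ
    have hfα : f α = f p := by simpa [hA] using hα
    have hfκ : ¬ f κ = f p := by simpa [hB] using hκ
    have hακ : α ≠ κ := fun h => hfκ (h ▸ hfα)
    ext i
    have hL : i ∈ Sset (g (α, κ)) ↔ f ((Equiv.swap α κ) i) = f p := by
      simp [hSset, hg]
    have hR : i ∈ insert κ (A.erase α) ↔ (i = κ ∨ (i ≠ α ∧ f i = f p)) := by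
      simp [hA, Finset.mem_insert, Finset.mem_erase]
    rw [hL, hR]
    rcases eq_or_ne i α with rfl | hiα
    · rw [Equiv.swap_apply_left]
      constructor
      · intro h; exact absurd h hfκ
      · intro h
        rcases h with h | h
        · exact absurd h hακ
        · exact absurd rfl h.1
    · rcases eq_or_ne i κ with rfl | hiκ
      · rw [Equiv.swap_apply_right]
        constructor
        · intro _; exact Or.inl rfl
        · intro _; exact hfα
      · rw [Equiv.swap_apply_of_ne_of_ne hiα hiκ]
        constructor
        · intro h; exact Or.inr ⟨hiα, h⟩
        · intro h
          rcases h with h | h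
          · exact absurd h hiκ
          · exact h.2
  -- injectivity on s
  have hinj : Set.InjOn g s := by
    intro x hx y hy hxy
    have hx' : x = (p,p) ∨ (x.1 ∈ A ∧ x.2 ∈ B) := by
      rcases Finset.mem_insert.mp hx with h | h
      · exact Or.inl h
      · exact Or.inr (Finset.mem_product.mp h)
    have hy' : y = (p,p) ∨ (y.1 ∈ A ∧ y.2 ∈ B) := by
      rcases Finset.mem_insert.mp hy with h | h
      · exact Or.inl h
      · exact Or.inr (Finset.mem_product.mp h)
    have hκA : ∀ (κ : Fin n), κ ∈ B → κ ∉ A := by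
      intro κ hκ hκA
      have := (Finset.mem_filter.mp hκ).2
      exact this (Finset.mem_filter.mp hκA).2
    rcases hx' with rfl | ⟨hx1, hx2⟩ <;> rcases hy' with rfl | ⟨hy1, hy2⟩
    · rfl
    · exfalso
      have h1 : A = insert y.2 (A.erase y.1) := by
        conv_lhs => rw [← hbase]
        rw [hxy, hpair y.1 y.2 hy1 hy2]
      have : y.2 ∈ A := h1 ▸ Finset.mem_insert_self _ _
      exact hκA y.2 hy2 this
    · exfalso
      have h1 : A = insert x.2 (A.erase x.1) := by
        conv_lhs => rw [← hbase]
        rw [← hxy, hpair x.1 x.2 hx1 hx2]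
      have : x.2 ∈ A := h1 ▸ Finset.mem_insert_self _ _
      exact hκA x.2 hx2 this
    · have h1 : insert x.2 (A.erase x.1) = insert y.2 (A.erase y.1) := by
        rw [← hpair x.1 x.2 hx1 hx2, ← hpair y.1 y.2 hy1 hy2, hxy]
      have hx2A := hκA x.2 hx2
      have hy2A := hκA y.2 hy2
      have h22 : x.2 = y.2 := by
        have : x.2 ∈ insert y.2 (A.erase y.1) := h1 ▸ Finset.mem_insert_self _ _
        rcases Finset.mem_insert.mp this with h | h
        · exact h
        · exact absurd (Finset.mem_of_mem_erase h) hx2A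
      have herase : A.erase x.1 = A.erase y.1 := by
        ext i
        constructor
        · intro hi
          have hiy : i ∈ insert y.2 (A.erase y.1) := h1 ▸ Finset.mem_insert_of_mem hi
          rcases Finset.mem_insert.mp hiy with rfl | h
          · exact absurd (Finset.mem_of_mem_erase hi) hy2A
          · exact h
        · intro hi
          have hix : i ∈ insert x.2 (A.erase x.1) := h1.symm ▸ Finset.mem_insert_of_mem hi
          rcases Finset.mem_insert.mp hix with rfl | h
          · exact absurd (Finset.mem_of_mem_erase hi) hx2A
          · exact h
      have h11 : x.1 = y.1 := by
        by_contra hne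
        have h2 : y.1 ∈ A.erase x.1 := Finset.mem_erase.mpr ⟨fun h => hne h.symm, hy1⟩
        rw [herase] at h2
        exact absurd rfl (Finset.mem_erase.mp h2).1
      exact Prod.ext h11 h22
  -- cardinality of s
  have hcard : n ≤ s.card := by
    have hnotmem : (p,p) ∉ A ×ˢ B := by
      intro h
      exact (Finset.mem_filter.mp (Finset.mem_product.mp h).2).2 rfl
    have h1 : s.card = A.card * B.card + 1 := by
      rw [hs, Finset.card_insert_of_notMem hnotmem, Finset.card_product]
    have hAB : A.card + B.card = n := by
      rw [hA, hB]
      rw [Finset.card_filter_add_card_filter_not]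
      simp
    have hA1 : 1 ≤ A.card := Finset.card_pos.mpr ⟨p, hpA⟩
    have hB1 : 1 ≤ B.card := Finset.card_pos.mpr ⟨q, hqB⟩
    have hmul : A.card + B.card ≤ A.card * B.card + 1 := by
      obtain ⟨a, ha⟩ : ∃ a, A.card = a + 1 := ⟨A.card - 1, by omega⟩
      obtain ⟨b, hb⟩ : ∃ b, B.card = b + 1 := ⟨B.card - 1, by omega⟩
      rw [ha, hb]
      nlinarith [Nat.zero_le (a*b)]
    omega
  -- conclude
  have himg : ↑(s.image g) ⊆ Set.range fun σ : Equiv.Perm (Fin n) => f ∘ σ := by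
    intro h hh
    simp only [Finset.coe_image, Set.mem_image, Finset.mem_coe] at hh
    obtain ⟨ακ, _, rfl⟩ := hh
    exact ⟨Equiv.swap ακ.1 ακ.2, rfl⟩
  have hfin : (Set.range fun σ : Equiv.Perm (Fin n) => f ∘ σ).Finite := Set.finite_range _
  calc n ≤ s.card := hcard
    _ = (s.image g).card := (Finset.card_image_of_injOn hinj).symm
    _ = (↑(s.image g) : Set (Fin n → X)).ncard := (Set.ncard_coe_finset _).symm
    _ ≤ _ := Set.ncard_le_ncard himg hfin


set_option maxHeartbeats 2000000 in
lemma ratio_count {n : ℕ} (hn : 5 ≤ n) (w : Fin n → ℂˣ) (a b : Fin n) (hw : w a ≠ w b) :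
    n ≤ Set.ncard (Set.range fun σ : Equiv.Perm (Fin n) =>
      (fun i j => w (σ⁻¹ i) * (w (σ⁻¹ j))⁻¹ : Fin n → Fin n → ℂˣ)) := by
  classical
  set Rfun : Equiv.Perm (Fin n) → (Fin n → Fin n → ℂˣ) :=
    fun σ => (fun i j => w (σ⁻¹ i) * (w (σ⁻¹ j))⁻¹) with hR
  set ν : Fin n → ℕ := fun i => (univ.filter (fun j => w j = w i)).card with hν
  by_cases hcon : ∀ i j : Fin n, ν i = ν j
  · -- ν constant
    set V : Finset ℂˣ := univ.image w with hV
    set m : ℕ := ν b with hm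
    set k : ℕ := V.card with hk
    have hm1 : 1 ≤ m := by
      rw [hm, hν]
      exact Finset.card_pos.mpr ⟨b, by simp⟩
    have hfiber : ∀ v ∈ V, (univ.filter (fun j => w j = v)).card = m := by
      intro v hv
      obtain ⟨i, _, rfl⟩ := Finset.mem_image.mp hv
      exact hcon i b
    have hkm : n = k * m := by
      have h0 := Finset.card_eq_sum_card_image w (univ : Finset (Fin n))
      rw [Finset.card_univ, Fintype.card_fin] at h0
      rw [h0, Finset.sum_congr rfl (fun v hv => hfiber v hv)]
      simp [hk, mul_comm]
    have hk2 : 2 ≤ k :=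
      Finset.one_lt_card.mpr ⟨w a, Finset.mem_image_of_mem w (mem_univ a),
        w b, Finset.mem_image_of_mem w (mem_univ b), hw⟩
    -- the subgroup-like finset of w-preserving permutations
    set Kfin : Finset (Equiv.Perm (Fin n)) := univ.filter (fun π => ∀ i, w (π i) = w i)
      with hKfin
    have hKcard : Kfin.card ≤ (Nat.factorial m)^k := by
      set Phi : Equiv.Perm (Fin n) → (∀ v : {x // x ∈ V}, Equiv.Perm {i : Fin n // w i = v.1}) :=
        fun π => if h : ∀ i, w (π i) = w i then
          (fun v => Equiv.Perm.subtypePerm π (fun x => by rw [h x])) else fun _ => 1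
        with hPhi
      have hinjPhi : Set.InjOn Phi ↑Kfin := by
        intro π hπ π' hπ' h
        have hπ1 := (Finset.mem_filter.mp hπ).2
        have hπ'1 := (Finset.mem_filter.mp hπ').2
        apply Equiv.ext
        intro i
        have hv : w i ∈ V := Finset.mem_image_of_mem w (mem_univ i)
        have h2 := congr_fun h ⟨w i, hv⟩
        simp only [hPhi, dif_pos hπ1, dif_pos hπ'1] at h2
        have h3 := DFunLike.congr_fun h2 (⟨i, rfl⟩ : {j : Fin n // w j = w i})
        simp only [Equiv.Perm.subtypePerm_apply] at h3
        exact Subtype.ext_iff.mp h3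
      calc Kfin.card = (Kfin.image Phi).card := (Finset.card_image_of_injOn hinjPhi).symm
        _ ≤ Fintype.card (∀ v : {x // x ∈ V}, Equiv.Perm {i : Fin n // w i = v.1}) := by
            rw [← Finset.card_univ]
            exact Finset.card_le_card (Finset.subset_univ _)
        _ = ∏ v : {x // x ∈ V}, Nat.factorial (Fintype.card {i : Fin n // w i = v.1}) := by
            rw [Fintype.card_pi]
            exact Finset.prod_congr rfl (fun v _ => Fintype.card_perm)
        _ = (Nat.factorial m)^k := by
            rw [Finset.prod_congr rfl (fun (v : {x // x ∈ V}) _ => by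
              rw [Fintype.card_subtype, hfiber v.1 v.2] : ∀ v ∈ (univ : Finset {x // x ∈ V}),
                Nat.factorial (Fintype.card {i : Fin n // w i = v.1}) = Nat.factorial m)]
            rw [Finset.prod_const, Finset.card_univ, Fintype.card_coe]
    -- fiber bound for Rfun
    have hfib : ∀ M ∈ (univ : Finset (Equiv.Perm (Fin n))).image Rfun,
        ((univ : Finset (Equiv.Perm (Fin n))).filter (fun σ => Rfun σ = M)).card
          ≤ (Nat.factorial m)^k * k := by
      intro M hM
      set F := (univ : Finset (Equiv.Perm (Fin n))).filter (fun σ => Rfun σ = M) with hF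
      have hinner : ∀ v ∈ F.image (fun σ => w (σ⁻¹ b)),
          (F.filter (fun σ => w (σ⁻¹ b) = v)).card ≤ (Nat.factorial m)^k := by
        intro v hv
        obtain ⟨σ₀, hσ₀F, hσ₀v⟩ := Finset.mem_image.mp hv
        have hσ₀M : Rfun σ₀ = M := (Finset.mem_filter.mp hσ₀F).2
        refine le_trans (Finset.card_le_card_of_injOn (fun σ => σ⁻¹ * σ₀) ?_ ?_) hKcard
        · intro σ hσ
          obtain ⟨hσF, hσv⟩ := Finset.mem_filter.mp hσ
          have hσM : Rfun σ = M := (Finset.mem_filter.mp hσF).2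
          have hconst : ∀ x, w (σ⁻¹ x) = w (σ₀⁻¹ x) := by
            intro x
            have e1 : Rfun σ x b = Rfun σ₀ x b := by rw [hσM, hσ₀M]
            simp only [hR] at e1
            rw [hσv, hσ₀v] at e1
            exact mul_right_cancel e1
          rw [hKfin, Finset.mem_coe, Finset.mem_filter]
          refine ⟨mem_univ _, fun i => ?_⟩
          have : (σ⁻¹ * σ₀) i = σ⁻¹ (σ₀ i) := rfl
          rw [this, hconst (σ₀ i), Equiv.Perm.inv_def, Equiv.symm_apply_apply]
        · intro σ _ σ' _ hσσ'
          have := mul_right_cancel hσσ'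
          exact inv_injective this
      have houter : (F.image (fun σ => w (σ⁻¹ b))).card ≤ k := by
        apply Finset.card_le_card
        intro v hv
        obtain ⟨σ, _, rfl⟩ := Finset.mem_image.mp hv
        exact Finset.mem_image_of_mem w (mem_univ _)
      calc F.card ≤ (Nat.factorial m)^k * (F.image (fun σ => w (σ⁻¹ b))).card :=
            Finset.card_le_mul_card_image (f := fun σ => w (σ⁻¹ b)) F _ hinner
        _ ≤ (Nat.factorial m)^k * k := Nat.mul_le_mul_left _ houter
    have htot : (univ : Finset (Equiv.Perm (Fin n))).card
        ≤ ((Nat.factorial m)^k * k) * ((univ : Finset (Equiv.Perm (Fin n))).image Rfun).card :=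
      Finset.card_le_mul_card_image (f := Rfun) univ _ hfib
    have hcardP : (univ : Finset (Equiv.Perm (Fin n))).card = Nat.factorial n := by
      rw [Finset.card_univ, Fintype.card_perm, Fintype.card_fin]
    have hineq := key_ineq k m hk2 hm1 (by rw [← hkm]; exact hn)
    have hBpos : 0 < (Nat.factorial m)^k * k := by positivity
    have hn_le : n ≤ ((univ : Finset (Equiv.Perm (Fin n))).image Rfun).card := by
      have h1 : ((Nat.factorial m)^k * k) * n
          ≤ ((Nat.factorial m)^k * k) * ((univ : Finset (Equiv.Perm (Fin n))).image Rfun).card := by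
        calc ((Nat.factorial m)^k * k) * n = (Nat.factorial m)^k * (k * (k*m)) := by
              rw [hkm]; ring
          _ ≤ Nat.factorial (k*m) := hineq
          _ = Nat.factorial n := by rw [← hkm]
          _ = (univ : Finset (Equiv.Perm (Fin n))).card := hcardP.symm
          _ ≤ _ := htot
      exact Nat.le_of_mul_le_mul_left h1 hBpos
    have hrange : Set.range Rfun = ↑((univ : Finset (Equiv.Perm (Fin n))).image Rfun) := by
      rw [Finset.coe_image, Finset.coe_univ, Set.image_univ]
    calc n ≤ ((univ : Finset (Equiv.Perm (Fin n))).image Rfun).card := hn_le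
      _ = Set.ncard (Set.range Rfun) := by rw [hrange, Set.ncard_coe_finset]
  · -- ν nonconstant
    push_neg at hcon
    obtain ⟨p, q, hpq⟩ := hcon
    set Count : (Fin n → Fin n → ℂˣ) → (Fin n → ℕ) :=
      fun M i => (univ.filter (fun j => M i j = 1)).card with hC
    have hCR : ∀ τ : Equiv.Perm (Fin n), Count (Rfun τ) = ν ∘ ⇑τ⁻¹ := by
      intro τ
      funext i
      show (univ.filter (fun j => w (τ⁻¹ i) * (w (τ⁻¹ j))⁻¹ = 1)).card = ν (τ⁻¹ i)
      have hset : univ.filter (fun j => w (τ⁻¹ i) * (w (τ⁻¹ j))⁻¹ = 1)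
          = (univ.filter (fun j => w j = w (τ⁻¹ i))).map (Equiv.toEmbedding τ) := by
        ext j
        simp only [Finset.mem_filter, Finset.mem_univ, true_and, Finset.mem_map,
          Equiv.toEmbedding_apply]
        rw [mul_inv_eq_one]
        constructor
        · intro h
          exact ⟨τ⁻¹ j, h.symm, by simp⟩
        · rintro ⟨j', hj', rfl⟩
          simpa using hj'.symm
      rw [hset, Finset.card_map]
    have himg : (Count '' Set.range Rfun) = Set.range (fun σ : Equiv.Perm (Fin n) => ν ∘ σ) := by
      ext g
      constructor
      · rintro ⟨M, ⟨τ, rfl⟩, rfl⟩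
        exact ⟨τ⁻¹, (hCR τ).symm⟩
      · rintro ⟨σ, rfl⟩
        refine ⟨Rfun σ⁻¹, ⟨σ⁻¹, rfl⟩, ?_⟩
        rw [hCR σ⁻¹, inv_inv]
    calc n ≤ Set.ncard (Set.range fun σ : Equiv.Perm (Fin n) => ν ∘ σ) :=
          perm_tuple_count ν p q hpq
      _ = Set.ncard (Count '' Set.range Rfun) := by rw [himg]
      _ ≤ Set.ncard (Set.range Rfun) := Set.ncard_image_le (Set.finite_range _)


/-- The subgroup `T` of `(Kˣ)^n` of tuples whose product is `1`. -/
def prodOneSubgroup (n : ℕ) (K : Type) [Field K] : Subgroup (Fin n → Kˣ) where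
  carrier := {t | ∏ i, t i = 1}
  mul_mem' := by
    intro a b ha hb
    simp only [Set.mem_setOf_eq, Pi.mul_apply, Finset.prod_mul_distrib] at *
    rw [ha, hb, mul_one]
  one_mem' := by simp
  inv_mem' := by
    intro a ha
    simp only [Set.mem_setOf_eq, Pi.inv_apply] at *
    rw [Finset.prod_inv_distrib, ha, inv_one]

/-- The action of a permutation `σ ∈ S_n` on `T`, given by `(σ·t) i = t (σ⁻¹ i)`. -/
def permAction (n : ℕ) (K : Type) [Field K] (σ : Equiv.Perm (Fin n)) :
    prodOneSubgroup n K →* prodOneSubgroup n K where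
  toFun t := ⟨fun i => (t : Fin n → Kˣ) (σ⁻¹ i), by
    have ht : ∏ i, (t : Fin n → Kˣ) i = 1 := t.2
    calc ∏ i, (t : Fin n → Kˣ) (σ⁻¹ i) = ∏ i, (t : Fin n → Kˣ) i :=
          Equiv.prod_comp σ⁻¹ _
      _ = 1 := ht⟩
  map_one' := rfl
  map_mul' t s := rfl

lemma mem_prodOne (n : ℕ) (K : Type) [Field K] (u : Fin n → Kˣ) (h : ∏ l, u l = 1) :
    u ∈ prodOneSubgroup n K := h

/-- The element of `T` with `x` in coordinate `i` and `x⁻¹` in coordinate `j`. -/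
def Efun (n : ℕ) (K : Type) [Field K] (i j : Fin n) (x : Kˣ) : prodOneSubgroup n K :=
  ⟨Pi.mulSingle i x * Pi.mulSingle j x⁻¹, by
    apply mem_prodOne
    simp only [Pi.mul_apply]
    rw [Finset.prod_mul_distrib, Fintype.prod_pi_mulSingle' i x,
      Fintype.prod_pi_mulSingle' j x⁻¹, mul_inv_cancel]⟩

lemma Efun_same (n : ℕ) (K : Type) [Field K] (i : Fin n) (x : Kˣ) : Efun n K i i x = 1 := by
  apply Subtype.ext
  simp only [Efun, OneMemClass.coe_one]
  rw [← Pi.mulSingle_mul, mul_inv_cancel, Pi.mulSingle_one]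

lemma Efun_mul (n : ℕ) (K : Type) [Field K] (i j b : Fin n) (x : Kˣ) :
    Efun n K i b x * (Efun n K j b x)⁻¹ = Efun n K i j x := by
  apply Subtype.ext
  simp only [Efun, Subgroup.coe_mul, InvMemClass.coe_inv]
  simp only [Pi.mulSingle_inv]
  group

lemma Efun_perm (n : ℕ) (K : Type) [Field K] (σ : Equiv.Perm (Fin n)) (i j : Fin n) (x : Kˣ) :
    permAction n K σ (Efun n K i j x) = Efun n K (σ i) (σ j) x := by
  apply Subtype.ext
  funext l
  simp only [permAction, Efun, MonoidHom.coe_mk, OneHom.coe_mk, Pi.mul_apply,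
    Pi.mulSingle_apply, Equiv.Perm.inv_eq_iff_eq]

lemma Efun_decomp (n : ℕ) (K : Type) [Field K] (b : Fin n) (t : prodOneSubgroup n K) :
    t = ∏ i, Efun n K i b ((t : Fin n → Kˣ) i) := by
  apply Subtype.ext
  rw [Subgroup.val_finset_prod]
  have ht : ∏ i, (t : Fin n → Kˣ) i = 1 := t.2
  calc (t : Fin n → Kˣ)
      = (∏ i, Pi.mulSingle i ((t : Fin n → Kˣ) i)) *
          Pi.mulSingle b (∏ i, ((t : Fin n → Kˣ) i)⁻¹) := by
        rw [Finset.univ_prod_mulSingle, Finset.prod_inv_distrib, ht, inv_one,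
          Pi.mulSingle_one, mul_one]
    _ = (∏ i, Pi.mulSingle i ((t : Fin n → Kˣ) i)) *
          (∏ i, Pi.mulSingle b (((t : Fin n → Kˣ) i)⁻¹)) := by
        rw [← MonoidHom.mulSingle_apply, map_prod]
        simp only [MonoidHom.mulSingle_apply]
    _ = ∏ i, (Pi.mulSingle i ((t : Fin n → Kˣ) i) * Pi.mulSingle b (((t : Fin n → Kˣ) i)⁻¹)) := by
        rw [Finset.prod_mul_distrib]
    _ = ∏ i, ((Efun n K i b ((t : Fin n → Kˣ) i) : prodOneSubgroup n K) : Fin n → Kˣ) := rfl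

lemma exists_nontriv (n : ℕ) (K : Type) [Field K] (β : prodOneSubgroup n K →* ℂˣ)
    (hβ : β ≠ 1) (b : Fin n) : ∃ (a : Fin n) (x : Kˣ), β (Efun n K a b x) ≠ 1 := by
  by_contra h
  push_neg at h
  apply hβ
  apply MonoidHom.ext
  intro t
  rw [MonoidHom.one_apply]
  calc β t = ∏ i, β (Efun n K i b ((t : Fin n → Kˣ) i)) := by
        rw [← map_prod, ← Efun_decomp]
    _ = 1 := Finset.prod_eq_one (fun i _ => h i ((t : Fin n → Kˣ) i))

/-- For a finite field `K` with `q` elements and `n ≥ 5`, the `S_n`-orbit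
`{σ·β}` (where `(σ·β)(t) = β(σ⁻¹·t)`) of any nontrivial complex character `β` of the
group `T` of tuples in `(Kˣ)^n` of product `1` has at least `n` elements. -/
theorem orbit_of_nontrivial_character_ge
    (q n : ℕ) (hn : 5 ≤ n)
    (K : Type) [Field K] [Fintype K] (hK : Fintype.card K = q)
    (β : prodOneSubgroup n K →* ℂˣ) (hβ : β ≠ 1) :
    n ≤ Set.ncard
      (Set.range fun σ : Equiv.Perm (Fin n) => β.comp (permAction n K σ⁻¹)) := by
  classical
  have hb0 : (0:ℕ) < n := by omega
  set b : Fin n := ⟨0, hb0⟩ with hbdef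
  obtain ⟨a, x, hax⟩ := exists_nontriv n K β hβ b
  set w : Fin n → ℂˣ := fun i => β (Efun n K i b x) with hwdef
  have hwb : w b = 1 := by
    rw [hwdef]
    simp only [Efun_same, map_one]
  have hwa : w a ≠ w b := by rw [hwb]; exact hax
  set Ext : (prodOneSubgroup n K →* ℂˣ) → (Fin n → Fin n → ℂˣ) :=
    fun γ => fun i j => γ (Efun n K i j x) with hExt
  have hkey : ∀ σ : Equiv.Perm (Fin n),
      Ext (β.comp (permAction n K σ⁻¹)) = fun i j => w (σ⁻¹ i) * (w (σ⁻¹ j))⁻¹ := by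
    intro σ
    funext i j
    show β ((permAction n K σ⁻¹) (Efun n K i j x)) = w (σ⁻¹ i) * (w (σ⁻¹ j))⁻¹
    rw [Efun_perm, ← Efun_mul n K (σ⁻¹ i) (σ⁻¹ j) b x, map_mul, map_inv]
  have himg : (Set.range fun σ : Equiv.Perm (Fin n) =>
      (fun i j => w (σ⁻¹ i) * (w (σ⁻¹ j))⁻¹ : Fin n → Fin n → ℂˣ))
      = Ext '' (Set.range fun σ : Equiv.Perm (Fin n) => β.comp (permAction n K σ⁻¹)) := by
    ext M
    constructor
    · rintro ⟨σ, rfl⟩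
      exact ⟨β.comp (permAction n K σ⁻¹), ⟨σ, rfl⟩, hkey σ⟩
    · rintro ⟨γ, ⟨σ, rfl⟩, rfl⟩
      exact ⟨σ, (hkey σ).symm⟩
  have h1 := ratio_count hn w a b hwa
  rw [himg] at h1
  exact le_trans h1 (Set.ncard_image_le (Set.finite_range _))
end

section
/- Let n ≥ 1 and m ≥ 2 be integers and let W be a subgroup of GL(n, ℤ). W acts on (ℤ/mℤ)^n via reduction of matrix entries modulo m. Then there exists a nontrivial group homomorphism χ : (ℤ/mℤ)^n → ℂˣ satisfying χ(w·x) = χ(x) for all w ∈ W and x ∈ (ℤ/mℤ)^n if and only if there exist a prime ℓ dividing m and a nonzero vector v ∈ (ℤ/ℓℤ)^n such that (w mod ℓ)ᵀ · v = v for all w ∈ W, where (w mod ℓ)ᵀ denotes the transpose of the reduction of w modulo ℓ. -/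
open Matrix

section aux

lemma addChar_map_sum {A M : Type*} [AddCommMonoid A] [CommMonoid M]
    (χ : AddChar A M) {ι : Type*} (s : Finset ι) (f : ι → A) :
    χ (∑ i ∈ s, f i) = ∏ i ∈ s, χ (f i) := by
  classical
  induction s using Finset.cons_induction with
  | empty => simp [AddChar.map_zero_eq_one]
  | cons i s hi ih =>
    rw [Finset.sum_cons, Finset.prod_cons, AddChar.map_add_eq_mul, ih]

variable {ℓ m : ℕ}

/-- the additive embedding `ZMod ℓ →+ ZMod m` sending `1` to `m/ℓ`. -/
noncomputable def iotaHom (hdvd : ℓ ∣ m) : ZMod ℓ →+ ZMod m :=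
  ZMod.lift ℓ ⟨(AddMonoidHom.mulLeft (((m / ℓ : ℕ) : ZMod m))).comp (Int.castAddHom (ZMod m)),
    by
      show ((m / ℓ : ℕ) : ZMod m) * (((ℓ : ℕ) : ℤ) : ZMod m) = 0
      rw [Int.cast_natCast, ← Nat.cast_mul, Nat.div_mul_cancel hdvd, ZMod.natCast_self]⟩

lemma iotaHom_intCast (hdvd : ℓ ∣ m) (t : ℤ) :
    iotaHom hdvd ((t : ℤ) : ZMod ℓ) = ((m / ℓ : ℕ) : ZMod m) * (t : ZMod m) := by
  simp [iotaHom]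

lemma iotaHom_natCast (hdvd : ℓ ∣ m) (t : ℕ) :
    iotaHom hdvd ((t : ℕ) : ZMod ℓ) = (((m / ℓ) * t : ℕ) : ZMod m) := by
  have := iotaHom_intCast hdvd (t : ℤ)
  push_cast at this ⊢
  simpa using this

lemma iotaHom_injective (hℓ : ℓ.Prime) (hdvd : ℓ ∣ m) (hm : m ≠ 0) :
    Function.Injective (iotaHom (m := m) hdvd) := by
  haveI : NeZero ℓ := ⟨hℓ.ne_zero⟩
  have h0 : ∀ x : ZMod ℓ, iotaHom hdvd x = 0 → x = 0 := by
    intro x hx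
    have hxv : ((x.val : ℕ) : ZMod ℓ) = x := ZMod.natCast_zmod_val x
    rw [← hxv, iotaHom_natCast] at hx
    have hdvd2 : m ∣ (m / ℓ) * x.val := (ZMod.natCast_eq_zero_iff _ _).mp hx
    have hmeq : m = (m / ℓ) * ℓ := (Nat.div_mul_cancel hdvd).symm
    have hq : 0 < m / ℓ := Nat.div_pos (Nat.le_of_dvd (Nat.pos_of_ne_zero hm) hdvd) hℓ.pos
    obtain ⟨k, hk⟩ := hdvd2
    have hk' : (m / ℓ) * x.val = (m / ℓ) * (ℓ * k) := by rw [hk, ← mul_assoc, ← hmeq]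
    have hval : x.val = ℓ * k := Nat.eq_of_mul_eq_mul_left hq hk'
    have : ℓ ∣ x.val := ⟨k, hval⟩
    have hlt : x.val < ℓ := ZMod.val_lt x
    have hz : x.val = 0 := Nat.eq_zero_of_dvd_of_lt this hlt
    rw [← hxv, hz, Nat.cast_zero]
  intro a b hab
  have := h0 (a - b) (by rw [map_sub, hab, sub_self])
  exact sub_eq_zero.mp this

lemma iotaHom_surj_on (hℓ : ℓ.Prime) (hdvd : ℓ ∣ m) (hm : m ≠ 0)
    (x : ZMod m) (hx : ℓ • x = 0) : ∃ y : ZMod ℓ, iotaHom hdvd y = x := by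
  haveI : NeZero m := ⟨hm⟩
  have hxv : ((x.val : ℕ) : ZMod m) = x := ZMod.natCast_zmod_val x
  have h1 : ((ℓ * x.val : ℕ) : ZMod m) = 0 := by
    rw [Nat.cast_mul, hxv, ← nsmul_eq_mul, hx]
  have h2 : m ∣ ℓ * x.val := (ZMod.natCast_eq_zero_iff _ _).mp h1
  have hmeq : m = (m / ℓ) * ℓ := (Nat.div_mul_cancel hdvd).symm
  obtain ⟨k, hk⟩ := h2
  have hk' : ℓ * x.val = ℓ * ((m / ℓ) * k) := by
    rw [hk, ← mul_assoc, mul_comm ℓ (m / ℓ), ← hmeq]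
  have hval : x.val = (m / ℓ) * k := Nat.eq_of_mul_eq_mul_left hℓ.pos hk'
  refine ⟨(k : ZMod ℓ), ?_⟩
  rw [iotaHom_natCast, ← hval, hxv]

lemma iotaHom_mul (hdvd : ℓ ∣ m) (c : ℤ) (x : ZMod ℓ) :
    iotaHom (m := m) hdvd ((c : ZMod ℓ) * x) = (c : ZMod m) * iotaHom hdvd x := by
  rw [← zsmul_eq_mul, ← zsmul_eq_mul, map_zsmul]

lemma iotaHom_mulVec {n : ℕ} (hdvd : ℓ ∣ m)
    (A : Matrix (Fin n) (Fin n) ℤ) (v : Fin n → ZMod ℓ) :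
    (A.map (Int.cast : ℤ → ZMod m)).mulVec (fun j => iotaHom hdvd (v j)) =
      fun i => iotaHom hdvd ((A.map (Int.cast : ℤ → ZMod ℓ)).mulVec v i) := by
  funext i
  simp only [Matrix.mulVec, dotProduct, Matrix.map_apply]
  rw [map_sum]
  exact Finset.sum_congr rfl fun j _ => (iotaHom_mul hdvd (A i j) (v j)).symm

end aux

section char

variable {n m : ℕ}

/-- dot product with `a` as an additive monoid hom. -/
def dotHom (a : Fin n → ZMod m) : (Fin n → ZMod m) →+ ZMod m :=
  AddMonoidHom.mk' (fun x => a ⬝ᵥ x) (by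
    intro x y
    simp [dotProduct, mul_add, Finset.sum_add_distrib])

lemma exists_char_iff (hm : 2 ≤ m) (S : Set (Matrix (Fin n) (Fin n) ℤ)) :
    (∃ χ : AddChar (Fin n → ZMod m) ℂˣ, χ ≠ 1 ∧
        ∀ w ∈ S, ∀ x : Fin n → ZMod m,
          χ ((w.map (Int.cast : ℤ → ZMod m)).mulVec x) = χ x) ↔
      ∃ a : Fin n → ZMod m, a ≠ 0 ∧
        ∀ w ∈ S, (w.map (Int.cast : ℤ → ZMod m)).transpose.mulVec a = a := by
  haveI : NeZero m := ⟨by omega⟩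
  classical
  -- the primitive character
  set ζ : ℂ := Complex.exp (2 * Real.pi * Complex.I / m) with hζdef
  have hζ : IsPrimitiveRoot ζ m := Complex.isPrimitiveRoot_exp m (by omega)
  have hζm : ζ ^ m = 1 := hζ.pow_eq_one
  set ζu : ℂˣ := (hζ.isUnit (by omega)).unit with hζudef
  have hζu : (ζu : ℂ) = ζ := IsUnit.unit_spec _
  have hζum : ζu ^ m = 1 := by
    ext; rw [Units.val_pow_eq_pow_val, hζu, hζm, Units.val_one]
  set e : AddChar (ZMod m) ℂˣ := AddChar.zmodChar m hζum with hedef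
  have e_inj : Function.Injective e := by
    intro a b hab
    have : ζ ^ a.val = ζ ^ b.val := by
      have := congrArg Units.val hab
      simpa [hedef, AddChar.zmodChar_apply, Units.val_pow_eq_pow_val, hζu] using this
    have := hζ.pow_inj (ZMod.val_lt a) (ZMod.val_lt b) this
    rw [← ZMod.natCast_zmod_val a, ← ZMod.natCast_zmod_val b, this]
  have e_one : ∀ t : ZMod m, e t = 1 ↔ t = 0 := by
    intro t
    constructor
    · intro h; exact e_inj (by rw [h, AddChar.map_zero_eq_one])
    · intro h; rw [h, AddChar.map_zero_eq_one]
  -- characters from vectors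
  set Χ : (Fin n → ZMod m) → AddChar (Fin n → ZMod m) ℂˣ :=
    fun a => e.compAddMonoidHom (dotHom a) with hΧdef
  have hΧapp : ∀ a x, Χ a x = e (a ⬝ᵥ x) := fun a x => rfl
  constructor
  · rintro ⟨χ, hχ1, hχinv⟩
    -- extract the vector
    have hpow : ∀ i : Fin n, (χ (Pi.single i 1) : ℂ) ^ m = 1 := by
      intro i
      have h1 : χ (Pi.single i 1) ^ m = 1 := by
        rw [← AddChar.map_nsmul_eq_pow]
        have : m • (Pi.single i 1 : Fin n → ZMod m) = Pi.single i (m • (1 : ZMod m)) := by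
          rw [Pi.single_smul]
        rw [this]
        have : m • (1 : ZMod m) = 0 := by
          rw [nsmul_eq_mul, mul_one, ZMod.natCast_self]
        rw [this, Pi.single_zero, AddChar.map_zero_eq_one]
      rw [← Units.val_pow_eq_pow_val, h1, Units.val_one]
    have hkex : ∀ i : Fin n, ∃ k : ℕ, ζ ^ k = (χ (Pi.single i 1) : ℂ) := by
      intro i
      obtain ⟨k, _, hk⟩ := hζ.eq_pow_of_pow_eq_one (hpow i)
      exact ⟨k, hk⟩
    choose k hk using hkex
    set a : Fin n → ZMod m := fun i => (k i : ZMod m) with hadef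
    have hea : ∀ i, e (a i) = χ (Pi.single i 1) := by
      intro i
      ext
      rw [hadef]
      show ((AddChar.zmodChar m hζum) ((k i : ℕ) : ZMod m) : ℂ) = _
      rw [AddChar.zmodChar_apply', Units.val_pow_eq_pow_val, hζu, hk]
    -- χ = Χ a
    have hsingle : ∀ (ψ : AddChar (Fin n → ZMod m) ℂˣ) (i : Fin n) (c : ZMod m),
        ψ (Pi.single i c) = ψ (Pi.single i 1) ^ c.val := by
      intro ψ i c
      have hc : Pi.single i c = c.val • (Pi.single i 1 : Fin n → ZMod m) := by
        rw [← Pi.single_smul, nsmul_eq_mul, mul_one, ZMod.natCast_zmod_val]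
      rw [hc, AddChar.map_nsmul_eq_pow]
    have hχa : χ = Χ a := by
      ext x
      rw [← Finset.univ_sum_single x, addChar_map_sum χ, addChar_map_sum (Χ a)]
      congr 1
      refine Finset.prod_congr rfl fun i _ => ?_
      rw [hsingle χ i (x i), hsingle (Χ a) i (x i)]
      congr 1
      rw [hΧapp, dotProduct_single, mul_one, hea]
    refine ⟨a, ?_, ?_⟩
    · intro h
      apply hχ1
      ext x
      rw [hχa, hΧapp, h, zero_dotProduct, AddChar.map_zero_eq_one, AddChar.one_apply]
    · intro w hw
      have key : ∀ x : Fin n → ZMod m,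
          e ((w.map (Int.cast : ℤ → ZMod m)).transpose.mulVec a ⬝ᵥ x) = e (a ⬝ᵥ x) := by
        intro x
        have := hχinv w hw x
        rw [hχa, hΧapp, hΧapp] at this
        rw [Matrix.mulVec_transpose, ← Matrix.dotProduct_mulVec]
        exact this
      funext i
      have := e_inj (key (Pi.single i 1))
      rw [dotProduct_single, dotProduct_single, mul_one, mul_one] at this
      exact this
  · rintro ⟨a, ha0, hafix⟩
    refine ⟨Χ a, ?_, ?_⟩
    · obtain ⟨i, hi⟩ := Function.ne_iff.mp ha0
      intro h
      have : Χ a (Pi.single i 1) = 1 := by rw [h, AddChar.one_apply]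
      rw [hΧapp, dotProduct_single, mul_one, e_one] at this
      exact hi this
    · intro w hw x
      rw [hΧapp, hΧapp, Matrix.dotProduct_mulVec, ← Matrix.mulVec_transpose, hafix w hw]

end char

section vec

variable {n m : ℕ}

lemma exists_vector_iff (hm : 2 ≤ m) (S : Set (Matrix (Fin n) (Fin n) ℤ)) :
    (∃ a : Fin n → ZMod m, a ≠ 0 ∧
        ∀ w ∈ S, (w.map (Int.cast : ℤ → ZMod m)).transpose.mulVec a = a) ↔
      ∃ ℓ : ℕ, ℓ.Prime ∧ ℓ ∣ m ∧ ∃ v : Fin n → ZMod ℓ, v ≠ 0 ∧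
        ∀ w ∈ S, (w.map (Int.cast : ℤ → ZMod ℓ)).transpose.mulVec v = v := by
  have hm0 : m ≠ 0 := by omega
  haveI : NeZero m := ⟨hm0⟩
  constructor
  · rintro ⟨a, ha0, hafix⟩
    have hma : m • a = 0 := by
      funext i
      show m • a i = 0
      rw [nsmul_eq_mul, ZMod.natCast_self, zero_mul]
    set d : ℕ := addOrderOf a with hddef
    have hdm : d ∣ m := addOrderOf_dvd_of_nsmul_eq_zero hma
    have hd1 : d ≠ 1 := fun h => ha0 (AddMonoid.addOrderOf_eq_one_iff.mp h)
    have hdpos : 0 < d := Nat.pos_of_ne_zero (fun h => hm0 (by simpa [h] using hdm))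
    obtain ⟨ℓ, hℓp, hℓd⟩ := Nat.exists_prime_and_dvd hd1
    have hℓm : ℓ ∣ m := hℓd.trans hdm
    set b : Fin n → ZMod m := (d / ℓ) • a with hbdef
    have hb0 : b ≠ 0 := by
      intro h
      have hdvd : d ∣ d / ℓ := addOrderOf_dvd_iff_nsmul_eq_zero.mpr h
      have hqpos : 0 < d / ℓ := Nat.div_pos (Nat.le_of_dvd hdpos hℓd) hℓp.pos
      have := Nat.le_of_dvd hqpos hdvd
      have hlt : d / ℓ < d := Nat.div_lt_self hdpos hℓp.one_lt
      omega
    have hℓb : ℓ • b = 0 := by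
      rw [hbdef, smul_smul, Nat.mul_div_cancel' hℓd, addOrderOf_nsmul_eq_zero]
    have hbfix : ∀ w ∈ S, (w.map (Int.cast : ℤ → ZMod m)).transpose.mulVec b = b := by
      intro w hw
      rw [hbdef, Matrix.mulVec_smul, hafix w hw]
    have hcoord : ∀ i, ℓ • b i = 0 := fun i => congrFun hℓb i
    have hsur : ∀ i, ∃ y : ZMod ℓ, iotaHom hℓm y = b i :=
      fun i => iotaHom_surj_on hℓp hℓm hm0 (b i) (hcoord i)
    choose v hv using hsur
    have hinj := iotaHom_injective hℓp hℓm hm0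
    refine ⟨ℓ, hℓp, hℓm, v, ?_, ?_⟩
    · intro h
      apply hb0
      funext i
      rw [← hv i, congrFun h i]
      show iotaHom hℓm 0 = (0 : Fin n → ZMod m) i
      rw [map_zero]; rfl
    · intro w hw
      have hmain := iotaHom_mulVec (n := n) hℓm (wᵀ) v
      have hbv : (fun j => iotaHom hℓm (v j)) = b := funext hv
      rw [hbv, Matrix.transpose_map, hbfix w hw] at hmain
      funext i
      apply hinj
      rw [← Matrix.transpose_map, ← congrFun hmain i, ← hv i]
  · rintro ⟨ℓ, hℓp, hℓm, v, hv0, hvfix⟩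
    have hinj := iotaHom_injective hℓp hℓm hm0
    refine ⟨fun i => iotaHom hℓm (v i), ?_, ?_⟩
    · intro h
      apply hv0
      funext i
      have : iotaHom hℓm (v i) = iotaHom hℓm 0 := by
        rw [map_zero]; exact congrFun h i
      exact hinj this
    · intro w hw
      have hmain := iotaHom_mulVec (n := n) hℓm (wᵀ) v
      rw [Matrix.transpose_map] at hmain
      have h2 : wᵀ.map (Int.cast : ℤ → ZMod ℓ) *ᵥ v = v := by
        rw [Matrix.transpose_map]; exact hvfix w hw
      rw [hmain, h2]

end vec

/-- Let `W ≤ GL(n, ℤ)` act on `(ℤ/mℤ)^n` via reduction of matrix entries mod `m`.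
There is a nontrivial `W`-invariant complex character of `(ℤ/mℤ)^n` if and only if for
some prime `ℓ ∣ m` the transposed mod-`ℓ` reduction of `W` fixes a nonzero vector of
`(ℤ/ℓℤ)^n`. -/
theorem exists_invariant_character_iff_transpose_fixed_vector
    (n m : ℕ) (hn : 1 ≤ n) (hm : 2 ≤ m)
    (W : Subgroup (Matrix.GeneralLinearGroup (Fin n) ℤ)) :
    (∃ χ : AddChar (Fin n → ZMod m) ℂˣ, χ ≠ 1 ∧
        ∀ w ∈ W, ∀ x : Fin n → ZMod m,
          χ (((w : Matrix (Fin n) (Fin n) ℤ).map (Int.cast : ℤ → ZMod m)).mulVec x) = χ x) ↔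
      ∃ ℓ : ℕ, ℓ.Prime ∧ ℓ ∣ m ∧ ∃ v : Fin n → ZMod ℓ, v ≠ 0 ∧
        ∀ w ∈ W,
          ((w : Matrix (Fin n) (Fin n) ℤ).map (Int.cast : ℤ → ZMod ℓ)).transpose.mulVec v
            = v := by
  have e1 := exists_char_iff (n := n) hm
    ((fun w : Matrix.GeneralLinearGroup (Fin n) ℤ => (w : Matrix (Fin n) (Fin n) ℤ)) ''
      (W : Set _))
  have e2 := exists_vector_iff (n := n) hm
    ((fun w : Matrix.GeneralLinearGroup (Fin n) ℤ => (w : Matrix (Fin n) (Fin n) ℤ)) ''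
      (W : Set _))
  simp only [Set.forall_mem_image, SetLike.mem_coe] at e1 e2
  exact e1.trans e2
end
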